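/- arXiv:2301.00642 — 4 statements merged into one kernel-verified Lean document; each statement's English description precedes it below -/
import Mathlib

section
/- For a polynomial p with real coefficients that has only simple real roots (and degree at least 1), Laguerre's inequality holds strictly at every real point: p''(z)·p(z) − p'(z)² < 0 for all real z. -/
open Polynomial

private lemma laguerre_aux (s : Multiset ℝ) (hnd : s.Nodup) (hne : s ≠ 0) (z : ℝ) :
    (derivative (derivative (s.map (fun r => X - C r)).prod)).eval z *
        ((s.map (fun r => X - C r)).prod).eval z -
      ((derivative (s.map (fun r => X - C r)).prod).eval z) ^ 2 < 0 := by
  induction s using Multiset.induction_on with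
  | empty => exact absurd rfl hne
  | cons r t ih =>
    rw [Multiset.nodup_cons] at hnd
    obtain ⟨hrt, hndt⟩ := hnd
    set Q := (t.map (fun r => X - C r)).prod with hQ
    have hprod : ((r ::ₘ t).map (fun r => X - C r)).prod = (X - C r) * Q := by
      rw [Multiset.map_cons, Multiset.prod_cons]
    have hd1 : derivative ((X - C r) * Q) = Q + (X - C r) * derivative Q := by
      rw [derivative_mul, derivative_X_sub_C, one_mul]
    have hd2 : derivative (Q + (X - C r) * derivative Q)
        = 2 * derivative Q + (X - C r) * derivative (derivative Q) := by
      rw [derivative_add, derivative_mul, derivative_X_sub_C, one_mul]; ring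
    rw [hprod, hd1, hd2]
    set a := z - r with ha
    have hevals : ∀ q : Polynomial ℝ, ((X - C r) * q).eval z = a * q.eval z := by
      intro q; simp [ha]
    simp only [eval_add, eval_mul, eval_sub, eval_X, eval_C, eval_ofNat, ← ha]
    set Q0 := Q.eval z
    set Q1 := (derivative Q).eval z
    set Q2 := (derivative (derivative Q)).eval z
    rcases eq_or_ne t 0 with ht | ht
    · have : Q = 1 := by simp [hQ, ht]
      have h0 : Q0 = 1 := by simp [Q0, this]
      have h1 : Q1 = 0 := by simp [Q1, this]
      have h2 : Q2 = 0 := by simp [Q2, this]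
      rw [h0, h1, h2]; norm_num
    · have key : Q2 * Q0 - Q1 ^ 2 < 0 := ih hndt ht
      rcases eq_or_ne Q0 0 with hQ0 | hQ0
      · have hzmem : z ∈ t := by
          have : Q.eval z = 0 := hQ0
          rw [hQ, eval_multiset_prod] at this
          have h0 := Multiset.prod_eq_zero_iff.mp this
          rw [Multiset.mem_map] at h0
          obtain ⟨q, hq, hq0⟩ := h0
          rw [Multiset.mem_map] at hq
          obtain ⟨u, hu, rfl⟩ := hq
          simp only [eval_sub, eval_X, eval_C, sub_eq_zero] at hq0
          rwa [hq0]
        have hzr : z ≠ r := fun h => hrt (h ▸ hzmem)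
        have hane : a ≠ 0 := sub_ne_zero.mpr hzr
        have ha2 : 0 < a ^ 2 := by positivity
        nlinarith [sq_nonneg a, sq_abs a, pow_pos (abs_pos.mpr hane) 2, sq_abs Q1]
      · nlinarith [sq_nonneg a, sq_nonneg Q0, pow_pos (abs_pos.mpr hQ0) 2, sq_abs Q0, sq_nonneg (a * Q1)]

/-- Laguerre's inequality (strict version): for a real polynomial of degree at least 1
with only simple real roots, `p''(z) * p(z) - p'(z)^2 < 0` for every real `z`. -/
theorem laguerre_inequality_strict (p : Polynomial ℝ)
    (hdeg : 1 ≤ p.natDegree)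
    (hsplit : p.roots.card = p.natDegree)
    (hsimple : p.roots.Nodup) :
    ∀ z : ℝ,
      (derivative (derivative p)).eval z * p.eval z - ((derivative p).eval z) ^ 2 < 0 := by
  intro z
  have hp0 : p ≠ 0 := fun h => by simp [h] at hdeg
  have hfact := Polynomial.C_leadingCoeff_mul_prod_multiset_X_sub_C hsplit
  set q := (p.roots.map (fun r => X - C r)).prod with hq
  have hsne : p.roots ≠ 0 := by
    intro h
    rw [h, Multiset.card_zero] at hsplit
    omega
  have haux := laguerre_aux p.roots hsimple hsne z
  set a := p.leadingCoeff with hal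
  have ha : a ≠ 0 := leadingCoeff_ne_zero.mpr hp0
  have hpq : p = C a * q := hfact.symm
  have hd1 : derivative p = C a * derivative q := by rw [hpq, derivative_C_mul]
  have hd2 : derivative (derivative p) = C a * derivative (derivative q) := by
    rw [hd1, derivative_C_mul]
  rw [hpq, derivative_C_mul, derivative_C_mul]
  simp only [eval_mul, eval_C]
  have ha2 : 0 < a ^ 2 := by positivity
  nlinarith [haux]
end

section
/- For every x₀ ∈ [0,∞), the generalized Laguerre polynomial L_n(x₀, z), regarded as a polynomial in the parameter z, has degree n and all of its n roots are real and simple. -/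
open Polynomial Finset

/-- The generalized Laguerre polynomial `L_n(x₀, z)` viewed as a polynomial in the
parameter `z`, for fixed `x₀`. -/
noncomputable def laguerreZ (n : ℕ) (x₀ : ℝ) : Polynomial ℝ :=
  ∑ k ∈ Finset.range (n + 1),
    Polynomial.C ((-1 : ℝ) ^ k * x₀ ^ k / ((k.factorial : ℝ) * ((n - k).factorial : ℝ))) *
      ∏ j ∈ Finset.Icc (k + 1) n, (Polynomial.X + Polynomial.C (j : ℝ))

/-- Auxiliary recursively-defined polynomial: `lagP x₀ n = n! · L_n(x₀, z)`. -/
noncomputable def lagP (x₀ : ℝ) : ℕ → Polynomial ℝ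
  | 0 => 1
  | (m+1) => (X + C ((m : ℝ) + 1)) * lagP x₀ m - C x₀ * (lagP x₀ m).comp (X + C 1)

/-- Binomial-sum form of `lagP`. -/
noncomputable def lagS (x₀ : ℝ) (n : ℕ) : Polynomial ℝ :=
  ∑ k ∈ Finset.range (n + 1),
    C ((n.choose k : ℝ) * (-x₀) ^ k) * ∏ j ∈ Finset.Icc (k + 1) n, (X + C (j : ℝ))

lemma lagP_eq_lagS (x₀ : ℝ) (n : ℕ) : lagP x₀ n = lagS x₀ n := by
  induction n with
  | zero => simp [lagP, lagS]
  | succ n ih =>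
      rw [lagP, ih]
      unfold lagS
      -- compute the composition with X + C 1
      have hcomp : (∑ k ∈ Finset.range (n + 1),
          C ((n.choose k : ℝ) * (-x₀) ^ k) * ∏ j ∈ Finset.Icc (k + 1) n, (X + C (j : ℝ))).comp
            (X + C 1) =
          ∑ k ∈ Finset.range (n + 1),
            C ((n.choose k : ℝ) * (-x₀) ^ k) * ∏ j ∈ Finset.Icc (k + 2) (n + 1), (X + C (j : ℝ)) := by
        simp only [comp, eval₂_finset_sum]
        refine Finset.sum_congr rfl fun k hk => ?_
        rw [← comp]
        rw [mul_comp, C_comp, Polynomial.prod_comp]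
        congr 1
        have hmap : Finset.Icc (k + 2) (n + 1) =
            (Finset.Icc (k + 1) n).map (addRightEmbedding 1) := by
          rw [Finset.map_add_right_Icc]
        rw [hmap, Finset.prod_map]
        refine Finset.prod_congr rfl fun j hj => ?_
        simp only [add_comp, X_comp, C_comp, addRightEmbedding_apply]
        push_cast
        rw [C_add]
        ring
      rw [hcomp, Finset.mul_sum, Finset.mul_sum, ← Finset.sum_sub_distrib]
      -- rewrite each summand of the first part
      have h1 : ∀ k ∈ Finset.range (n + 1),
          (X + C ((n : ℝ) + 1)) * (C ((n.choose k : ℝ) * (-x₀) ^ k) *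
              ∏ j ∈ Finset.Icc (k + 1) n, (X + C (j : ℝ))) -
            C x₀ * (C ((n.choose k : ℝ) * (-x₀) ^ k) *
              ∏ j ∈ Finset.Icc (k + 2) (n + 1), (X + C (j : ℝ))) =
          C ((n.choose k : ℝ) * (-x₀) ^ k) * ∏ j ∈ Finset.Icc (k + 1) (n + 1), (X + C (j : ℝ)) +
            C ((n.choose k : ℝ) * (-x₀) ^ (k + 1)) *
              ∏ j ∈ Finset.Icc (k + 2) (n + 1), (X + C (j : ℝ)) := by
        intro k hk
        rw [Finset.prod_Icc_succ_top (Nat.succ_le_succ (Nat.lt_succ_iff.mp (Finset.mem_range.mp hk)))]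
        simp only [C_mul, C_pow, C_neg]
        push_cast
        ring
      rw [Finset.sum_congr rfl h1, Finset.sum_add_distrib]
      -- now both sides
      have h2 : ∑ k ∈ Finset.range (n + 1),
          C ((n.choose k : ℝ) * (-x₀) ^ k) * ∏ j ∈ Finset.Icc (k + 1) (n + 1), (X + C (j : ℝ)) =
          ∑ k ∈ Finset.range (n + 2),
          C ((n.choose k : ℝ) * (-x₀) ^ k) * ∏ j ∈ Finset.Icc (k + 1) (n + 1), (X + C (j : ℝ)) := by
        rw [Finset.sum_range_succ (n := n + 1)]
        simp [Nat.choose_succ_self]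
      rw [h2, Finset.sum_range_succ' (n := n + 1), Finset.sum_range_succ' (n := n + 1)]
      rw [add_right_comm, ← Finset.sum_add_distrib]
      refine congrArg₂ (· + ·) (Finset.sum_congr rfl fun k hk => ?_) (by simp)
      rw [Nat.choose_succ_succ']
      simp only [C_mul, C_pow, C_neg, C_add, Nat.cast_add]
      ring

lemma laguerreZ_eq (n : ℕ) (x₀ : ℝ) :
    laguerreZ n x₀ = C ((n.factorial : ℝ))⁻¹ * lagP x₀ n := by
  rw [lagP_eq_lagS, lagS, laguerreZ, Finset.mul_sum]
  refine Finset.sum_congr rfl fun k hk => ?_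
  rw [← mul_assoc, ← C_mul]
  congr 2
  have hk' : k ≤ n := Nat.lt_succ_iff.mp (Finset.mem_range.mp hk)
  rw [Nat.cast_choose ℝ hk']
  have h1 : (k.factorial : ℝ) ≠ 0 := Nat.cast_ne_zero.mpr k.factorial_ne_zero
  have h2 : ((n - k).factorial : ℝ) ≠ 0 := Nat.cast_ne_zero.mpr (n - k).factorial_ne_zero
  have h3 : (n.factorial : ℝ) ≠ 0 := Nat.cast_ne_zero.mpr n.factorial_ne_zero
  rw [neg_pow]
  field_simp
  ring

/-- Sign of a product of linear factors. -/
lemma sign_prod (s : ℕ → ℝ) (m k : ℕ) (hk : k ≤ m) (x : ℝ)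
    (h1 : ∀ i, i < k → s i < x) (h2 : ∀ i, k ≤ i → i < m → x < s i) :
    0 < (-1 : ℝ) ^ (m - k) * ∏ i ∈ Finset.range m, (x - s i) := by
  rw [Finset.range_eq_Ico, ← Finset.prod_Ico_consecutive _ (Nat.zero_le k) hk]
  have hpos : 0 < ∏ i ∈ Finset.Ico 0 k, (x - s i) :=
    Finset.prod_pos fun i hi => by
      have := h1 i (Finset.mem_Ico.mp hi).2; linarith
  have hneg : ∏ i ∈ Finset.Ico k m, (x - s i) =
      (-1 : ℝ) ^ (m - k) * ∏ i ∈ Finset.Ico k m, (s i - x) := by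
    rw [← Nat.card_Ico k m, ← Finset.prod_const, ← Finset.prod_mul_distrib]
    exact Finset.prod_congr rfl fun i _ => by ring
  have hpos2 : 0 < ∏ i ∈ Finset.Ico k m, (s i - x) :=
    Finset.prod_pos fun i hi => by
      have h := Finset.mem_Ico.mp hi
      have := h2 i h.1 h.2; linarith
  rw [hneg]
  have hsq : (-1 : ℝ) ^ (m - k) * (-1 : ℝ) ^ (m - k) = 1 := by
    rw [← pow_add]
    exact Even.neg_one_pow ⟨m - k, rfl⟩
  nlinarith [mul_pos hpos hpos2]

/-- IVT for polynomials. -/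
lemma poly_root_of_sign (P : Polynomial ℝ) {a b : ℝ} (hab : a < b)
    (h : P.eval a * P.eval b < 0) : ∃ t ∈ Set.Ioo a b, P.eval t = 0 := by
  have hc : ContinuousOn (fun x => P.eval x) (Set.Icc a b) :=
    (Polynomial.continuous P).continuousOn
  rcases lt_or_ge (P.eval a) 0 with ha | ha
  · have hb : 0 < P.eval b := by nlinarith
    have := intermediate_value_Ioo hab.le hc (by constructor <;> assumption :
      (0 : ℝ) ∈ Set.Ioo (P.eval a) (P.eval b))
    obtain ⟨t, ht, ht0⟩ := this
    exact ⟨t, ht, ht0⟩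
  · have ha' : 0 < P.eval a := by
      rcases ha.lt_or_eq with h' | h'
      · exact h'
      · exfalso; rw [← h'] at h; simp at h
    have hb : P.eval b < 0 := by nlinarith
    have := intermediate_value_Ioo' hab.le hc (by constructor <;> assumption :
      (0 : ℝ) ∈ Set.Ioo (P.eval b) (P.eval a))
    obtain ⟨t, ht, ht0⟩ := this
    exact ⟨t, ht, ht0⟩

/-- A monic polynomial of degree `n` with `n` distinct roots is the product of linear factors. -/
lemma eq_prod_of_roots (P : Polynomial ℝ) (hm : P.Monic) (n : ℕ) (hdeg : P.natDegree = n)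
    (t : ℕ → ℝ) (ht : ∀ i j, i < j → j < n → t i < t j)
    (hroot : ∀ i, i < n → P.eval (t i) = 0) :
    P = ∏ i ∈ Finset.range n, (X - C (t i)) ∧ P.roots = (Finset.range n).val.map t := by
  have hP0 : P ≠ 0 := hm.ne_zero
  set T : Multiset ℝ := (Finset.range n).val.map t with hT
  have hTnodup : T.Nodup := by
    refine Multiset.Nodup.map_on ?_ (Finset.range n).nodup
    intro i hi j hj hij
    by_contra hne
    rcases Nat.lt_or_ge i j with h | h
    · exact absurd hij (ne_of_lt (ht i j h (by simpa using hj)))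
    · have : j < i := lt_of_le_of_ne h (Ne.symm hne)
      exact absurd hij.symm (ne_of_lt (ht j i this (by simpa using hi)))
  have hTle : T ≤ P.roots := by
    rw [Multiset.le_iff_subset hTnodup]
    intro x hx
    obtain ⟨i, hi, rfl⟩ := Multiset.mem_map.mp hx
    rw [mem_roots hP0]
    exact hroot i (by simpa using hi)
  have hTcard : Multiset.card T = n := by simp [hT]
  have hcard : Multiset.card P.roots ≤ n := hdeg ▸ P.card_roots'
  have hroots : P.roots = T := (Multiset.eq_of_le_of_card_le hTle (by omega)).symm
  have hsplits : Splits P := by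
    rw [splits_iff_card_roots, hroots, hTcard, hdeg]
  have hprod := hsplits.eq_prod_roots_of_monic hm
  constructor
  · rw [hprod, hroots, hT, Multiset.map_map]
    rfl
  · exact hroots

/-- Monotonicity consequences of the gap hypothesis. -/
lemma gap_lt (s : ℕ → ℝ) (m : ℕ) (hgap : ∀ i, i + 1 < m → s i + 1 < s (i + 1)) :
    ∀ j i, i < j → j < m → s i + 1 < s j := by
  intro j
  induction j with
  | zero => omega
  | succ j ih =>
      intro i hij hjm
      rcases Nat.lt_succ_iff_lt_or_eq.mp hij with h | h
      · have h1 := ih i h (by omega)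
        have h2 := hgap j (by omega)
        linarith
      · subst h; exact hgap i hjm

/-- The induction step: multiplying by `(z + m + 1)` and subtracting `x₀ · q(z+1)` preserves the
root structure. -/
lemma lag_step (x₀ : ℝ) (hx : 0 < x₀) (m : ℕ) (s : ℕ → ℝ)
    (hgap : ∀ i, i + 1 < m → s i + 1 < s (i + 1))
    (hlow : ∀ i, i < m → -(m : ℝ) < s i) :
    ∃ t : ℕ → ℝ, (∀ i, i + 1 < m + 1 → t i + 1 < t (i + 1)) ∧
      (∀ i, i < m + 1 → -((m : ℝ) + 1) < t i) ∧
      (X + C ((m : ℝ) + 1)) * (∏ i ∈ Finset.range m, (X - C (s i))) -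
        C x₀ * (∏ i ∈ Finset.range m, (X - C (s i))).comp (X + C 1) =
        ∏ i ∈ Finset.range (m + 1), (X - C (t i)) := by
  have hs1 : ∀ i j, i < j → j < m → s i + 1 < s j := fun i j h1 h2 => gap_lt s m hgap j i h1 h2
  have hle : ∀ i j, i ≤ j → j < m → s i ≤ s j := by
    intro i j hij hjm
    rcases hij.lt_or_eq with h | h
    · linarith [hs1 i j h hjm]
    · subst h; rfl
  set q : Polynomial ℝ := ∏ i ∈ Finset.range m, (X - C (s i)) with hq
  set P : Polynomial ℝ :=
    (X + C ((m : ℝ) + 1)) * q - C x₀ * q.comp (X + C 1) with hP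
  have hqmonic : q.Monic := monic_prod_of_monic _ _ fun i _ => monic_X_sub_C _
  have hqdeg : q.natDegree = m := by
    rw [hq, natDegree_prod _ _ fun i _ => X_sub_C_ne_zero _]
    simp
  have hAmonic : ((X + C ((m : ℝ) + 1)) * q).Monic := (monic_X_add_C _).mul hqmonic
  have hAdeg : ((X + C ((m : ℝ) + 1)) * q).natDegree = m + 1 := by
    rw [natDegree_mul (X_add_C_ne_zero _) hqmonic.ne_zero, natDegree_X_add_C, hqdeg, add_comm]
  have hBdeg : (C x₀ * q.comp (X + C 1)).natDegree ≤ m := by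
    refine le_trans (natDegree_C_mul_le _ _) ?_
    rw [natDegree_comp, hqdeg, natDegree_X_add_C, mul_one]
  have hBlt : (C x₀ * q.comp (X + C 1)).degree < ((X + C ((m : ℝ) + 1)) * q).degree := by
    rw [degree_eq_natDegree hAmonic.ne_zero, hAdeg]
    refine lt_of_le_of_lt degree_le_natDegree ?_
    exact_mod_cast Nat.lt_succ_of_le hBdeg
  have hPmonic : P.Monic := by
    rw [hP, sub_eq_add_neg]
    exact hAmonic.add_of_left (by rwa [degree_neg])
  have hPdeg : P.natDegree = m + 1 := by
    rw [hP]
    rw [natDegree_eq_of_degree_eq (degree_sub_eq_left_of_degree_lt hBlt), hAdeg]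
  have heval : ∀ x : ℝ, P.eval x =
      (x + ((m : ℝ) + 1)) * ∏ i ∈ Finset.range m, (x - s i) -
        x₀ * ∏ i ∈ Finset.range m, (x + 1 - s i) := by
    intro x
    rw [hP, hq]
    simp [eval_prod, eval_comp]
  -- sign of P at the roots of q
  have hPs : ∀ i, i < m → 0 < (-1 : ℝ) ^ (m - i) * P.eval (s i) := by
    intro i hi
    have hzero : ∏ j ∈ Finset.range m, (s i - s j) = 0 :=
      Finset.prod_eq_zero (Finset.mem_range.mpr hi) (by ring)
    have hval : P.eval (s i) = -(x₀ * ∏ j ∈ Finset.range m, (s i + 1 - s j)) := by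
      rw [heval, hzero]; ring
    have hq1 : 0 < (-1 : ℝ) ^ (m - (i + 1)) * ∏ j ∈ Finset.range m, (s i + 1 - s j) := by
      refine sign_prod s m (i + 1) hi (s i + 1) (fun j hj => ?_) (fun j hj1 hj2 => ?_)
      · have : s j ≤ s i := hle j i (by omega) hi
        linarith
      · exact hs1 i j (by omega) hj2
    have he : m - i = (m - (i + 1)) + 1 := by omega
    rw [hval, he, pow_succ]
    nlinarith [mul_pos hx hq1]
  have hP0 : 0 < (-1 : ℝ) ^ (m + 1) * P.eval (-((m : ℝ) + 1)) := by
    have hval : P.eval (-((m : ℝ) + 1)) =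
        -(x₀ * ∏ j ∈ Finset.range m, (-(m : ℝ) - s j)) := by
      rw [heval]
      have : ∀ j ∈ Finset.range m, (-((m : ℝ) + 1) + 1 - s j) = -(m : ℝ) - s j :=
        fun j _ => by ring
      rw [Finset.prod_congr rfl this]
      ring
    have hq0 : 0 < (-1 : ℝ) ^ (m - 0) * ∏ j ∈ Finset.range m, (-(m : ℝ) - s j) := by
      refine sign_prod s m 0 (Nat.zero_le m) (-(m : ℝ)) (fun j hj => by omega) ?_
      intro j _ hj
      have := hlow j hj
      linarith
    simp only [Nat.sub_zero] at hq0
    rw [hval, pow_succ]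
    nlinarith [mul_pos hx hq0]
  -- a large positive point
  have htend : Filter.Tendsto (fun x => P.eval x) Filter.atTop Filter.atTop := by
    refine P.tendsto_atTop_of_leadingCoeff_nonneg ?_ ?_
    · rw [degree_eq_natDegree hPmonic.ne_zero, hPdeg]
      exact_mod_cast Nat.succ_pos m
    · rw [hPmonic.leadingCoeff]; exact zero_le_one
  obtain ⟨R, hR1, hR2⟩ :
      ∃ R : ℝ, 0 < P.eval R ∧
        (Finset.range (m + 1)).sup' Finset.nonempty_range_add_one (fun i => s i + 2) ≤ R ∧
          -(m : ℝ) ≤ R := by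
    have h1 := htend.eventually_gt_atTop 0
    have h2 := Filter.eventually_ge_atTop
      ((Finset.range (m + 1)).sup' Finset.nonempty_range_add_one (fun i => s i + 2))
    have h3 := Filter.eventually_ge_atTop (-(m : ℝ))
    obtain ⟨R, ⟨ha, hb⟩, hc⟩ := ((h1.and h2).and h3).exists
    exact ⟨R, ha, hb, hc⟩
  obtain ⟨hRs, hRm⟩ := hR2
  have hRbig : ∀ i, i < m + 1 → s i + 2 ≤ R := fun i hi =>
    le_trans (Finset.le_sup' (fun i => s i + 2) (Finset.mem_range.mpr hi)) hRs
  -- interval boundaries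
  set a : ℕ → ℝ := fun i => if i = 0 then -((m : ℝ) + 1) else if i ≤ m then s (i - 1) else R
    with ha
  have ha0 : a 0 = -((m : ℝ) + 1) := by simp [ha]
  have hamid : ∀ i, 1 ≤ i → i ≤ m → a i = s (i - 1) := by
    intro i h1 h2
    simp [ha, Nat.pos_iff_ne_zero.mp h1, h2]
  have hatop : a (m + 1) = R := by simp [ha]
  have haincr : ∀ i, i ≤ m → a i < a (i + 1) := by
    intro i hi
    rcases Nat.eq_zero_or_pos i with rfl | hpos
    · rcases Nat.eq_zero_or_pos m with rfl | hm
      · rw [ha0, hatop]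
        push_cast at hRm ⊢
        linarith
      · rw [ha0, hamid 1 le_rfl hm]
        have := hlow 0 hm
        simp only [Nat.sub_self]
        linarith
    · rcases Nat.lt_or_ge i m with him | him
      · rw [hamid i hpos hi, hamid (i + 1) (by omega) (by omega)]
        simp only [Nat.add_sub_cancel]
        have := hs1 (i - 1) i (by omega) him
        linarith
      · have : i = m := le_antisymm hi him
        subst this
        rw [hamid i hpos le_rfl, hatop]
        have := hRbig (i - 1) (by omega)
        linarith
  have hsigns : ∀ i, i ≤ m + 1 → 0 < (-1 : ℝ) ^ (m + 1 - i) * P.eval (a i) := by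
    intro i hi
    rcases Nat.eq_zero_or_pos i with rfl | hpos
    · rw [ha0]; simpa using hP0
    · rcases Nat.lt_or_ge i (m + 1) with him | him
      · rw [hamid i hpos (by omega)]
        have := hPs (i - 1) (by omega)
        have he : m - (i - 1) = m + 1 - i := by omega
        rwa [he] at this
      · have : i = m + 1 := le_antisymm hi him
        subst this
        rw [hatop]
        simpa using hR1
  -- roots in each interval
  have hroots : ∀ i, i ≤ m → ∃ x ∈ Set.Ioo (a i) (a (i + 1)), P.eval x = 0 := by
    intro i hi
    refine poly_root_of_sign P (haincr i hi) ?_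
    have h1 := hsigns i (by omega)
    have h2 := hsigns (i + 1) (by omega)
    have he : m + 1 - i = (m + 1 - (i + 1)) + 1 := by omega
    rw [he, pow_succ] at h1
    have hsq : ((-1 : ℝ) ^ (m + 1 - (i + 1))) * ((-1 : ℝ) ^ (m + 1 - (i + 1))) = 1 := by
      rw [← pow_add]
      exact Even.neg_one_pow ⟨m + 1 - (i + 1), rfl⟩
    nlinarith
  have hex : ∀ i, ∃ x : ℝ, i ≤ m → x ∈ Set.Ioo (a i) (a (i + 1)) ∧ P.eval x = 0 := by
    intro i
    rcases le_or_gt i m with hi | hi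
    · obtain ⟨x, hx1, hx2⟩ := hroots i hi
      exact ⟨x, fun _ => ⟨hx1, hx2⟩⟩
    · exact ⟨0, fun h => absurd h (by omega)⟩
  choose t ht using hex
  have htIoo : ∀ i, i ≤ m → t i ∈ Set.Ioo (a i) (a (i + 1)) := fun i hi => (ht i hi).1
  have htroot : ∀ i, i ≤ m → P.eval (t i) = 0 := fun i hi => (ht i hi).2
  have htmono : ∀ j i, i < j → j < m + 1 → t i < t j := by
    intro j
    induction j with
    | zero => omega
    | succ j ih =>
        intro i hij hjm
        have hstep : t j < t (j + 1) := by
          have h1 := (htIoo j (by omega)).2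
          have h2 := (htIoo (j + 1) (by omega)).1
          linarith
        rcases Nat.lt_succ_iff_lt_or_eq.mp hij with h | h
        · exact lt_trans (ih i h (by omega)) hstep
        · subst h; exact hstep
  obtain ⟨hPprod, hProots⟩ := eq_prod_of_roots P hPmonic (m + 1) hPdeg t
    (fun i j h1 h2 => htmono j i h1 h2) (fun i hi => htroot i (by omega))
  refine ⟨t, ?_, ?_, by rw [← hPprod]⟩
  · -- gaps
    intro i hi
    have him : i < m := by omega
    have h1 : s i < t (i + 1) := by
      have := (htIoo (i + 1) (by omega)).1
      rwa [hamid (i + 1) (by omega) (by omega), Nat.add_sub_cancel] at this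
    have h2 : t i < s i - 1 := by
      -- sign of P at s i - 1
      have hzero : ∏ j ∈ Finset.range m, (s i - 1 + 1 - s j) = 0 :=
        Finset.prod_eq_zero (Finset.mem_range.mpr him) (by ring)
      have hval : P.eval (s i - 1) =
          (s i + (m : ℝ)) * ∏ j ∈ Finset.range m, (s i - 1 - s j) := by
        rw [heval, hzero]; ring
      have hQ2 : 0 < (-1 : ℝ) ^ (m - i) * ∏ j ∈ Finset.range m, (s i - 1 - s j) := by
        refine sign_prod s m i him.le (s i - 1) (fun j hj => ?_) (fun j hj1 hj2 => ?_)
        · have := hs1 j i hj him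
          linarith
        · have := hle i j hj1 hj2
          linarith
      have hpos2 : (0 : ℝ) < s i + m := by
        have := hlow i him
        linarith
      have hv : 0 < (-1 : ℝ) ^ (m - i) * P.eval (s i - 1) := by
        rw [hval]
        nlinarith
      by_contra hcon
      push_neg at hcon
      -- then s i - 1 < t j for all j ≥ i, and t j < s i - 1 for j < i
      have hne : P.eval (s i - 1) ≠ 0 := by
        intro h0
        rw [h0, mul_zero] at hv
        exact lt_irrefl 0 hv
      have hti : s i - 1 < t i := by
        rcases lt_or_eq_of_le hcon with h | h
        · exact h
        · exact absurd (h ▸ htroot i (by omega)) hne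
      have hv2 : 0 < (-1 : ℝ) ^ (m + 1 - i) * P.eval (s i - 1) := by
        have := sign_prod t (m + 1) i (by omega) (s i - 1) (fun j hj => ?_) (fun j hj1 hj2 => ?_)
        · have hPev : P.eval (s i - 1) = ∏ j ∈ Finset.range (m + 1), (s i - 1 - t j) := by
            rw [hPprod]
            simp [eval_prod]
          rwa [← hPev] at this
        · -- j < i : t j < s i - 1
          have htja : t j < a (j + 1) := (htIoo j (by omega)).2
          rw [hamid (j + 1) (by omega) (by omega), Nat.add_sub_cancel] at htja
          have := hs1 j i hj him
          linarith
        · -- i ≤ j < m + 1 : s i - 1 < t j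
          rcases lt_or_eq_of_le hj1 with h | h
          · exact lt_trans hti (htmono j i h hj2)
          · subst h; exact hti
      have he : m + 1 - i = (m - i) + 1 := by omega
      rw [he, pow_succ] at hv2
      have hsq : ((-1 : ℝ) ^ (m - i)) * ((-1 : ℝ) ^ (m - i)) = 1 := by
        rw [← pow_add]
        exact Even.neg_one_pow ⟨m - i, rfl⟩
      nlinarith
    linarith
  · -- lower bounds
    intro i hi
    rcases Nat.eq_zero_or_pos i with rfl | hpos
    · have := (htIoo 0 (Nat.zero_le m)).1
      rwa [ha0] at this
    · have h1 := (htIoo i (by omega)).1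
      rw [hamid i hpos (by omega)] at h1
      have h2 := hlow (i - 1) (by omega)
      linarith

/-- For positive `x₀`, `lagP x₀ n` is a product of distinct linear factors whose roots
have pairwise gaps larger than `1` and are bounded below by `-n`. -/
lemma lagP_prod (x₀ : ℝ) (hx : 0 < x₀) (n : ℕ) :
    ∃ s : ℕ → ℝ, (∀ i, i + 1 < n → s i + 1 < s (i + 1)) ∧ (∀ i, i < n → -(n : ℝ) < s i) ∧
      lagP x₀ n = ∏ i ∈ Finset.range n, (X - C (s i)) := by
  induction n with
  | zero => exact ⟨fun _ => 0, fun i hi => absurd hi (by omega), fun i hi => absurd hi (by omega),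
      by simp [lagP]⟩
  | succ m ih =>
      obtain ⟨s, hgap, hlow, hrep⟩ := ih
      obtain ⟨t, h1, h2, h3⟩ := lag_step x₀ hx m s hgap hlow
      refine ⟨t, h1, fun i hi => ?_, ?_⟩
      · have := h2 i hi
        push_cast
        linarith
      · rw [lagP, hrep, h3]

lemma lagP_zero_prod (n : ℕ) :
    lagP 0 n = ∏ i ∈ Finset.range n, (X - C (-(1 + (i : ℝ)))) := by
  induction n with
  | zero => simp [lagP]
  | succ m ih =>
      rw [lagP, ih, Finset.prod_range_succ, C_0, zero_mul, sub_zero]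
      simp only [C_neg, C_add, C_1]
      ring

/-- From the linear-factor form, read off degree and roots. -/
lemma final_form (n : ℕ) (c : ℝ) (hc : c ≠ 0) (t : ℕ → ℝ)
    (hinj : ∀ i j, i < n → j < n → t i = t j → i = j)
    (Q : Polynomial ℝ) (hQ : Q = C c * ∏ i ∈ Finset.range n, (X - C (t i))) :
    Q.natDegree = n ∧ Q.roots.card = n ∧ Q.roots.Nodup := by
  have hprodeq : (∏ i ∈ Finset.range n, (X - C (t i))) =
      (((Finset.range n).val.map t).map fun a => X - C a).prod := by
    rw [Multiset.map_map]
    rfl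
  have hroots : Q.roots = (Finset.range n).val.map t := by
    rw [hQ, roots_C_mul _ hc, hprodeq, roots_multiset_prod_X_sub_C]
  have hnodup : ((Finset.range n).val.map t).Nodup := by
    refine Multiset.Nodup.map_on ?_ (Finset.range n).nodup
    intro i hi j hj hij
    exact hinj i j (by simpa using hi) (by simpa using hj) hij
  refine ⟨?_, ?_, ?_⟩
  · rw [hQ, natDegree_C_mul hc, natDegree_prod _ _ fun i _ => X_sub_C_ne_zero _]
    simp
  · rw [hroots]; simp
  · rw [hroots]; exact hnodup

/-- For every `x₀ ≥ 0`, `L_n(x₀, ·)` has degree `n` and all of its `n` roots are real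
and simple. -/
theorem laguerreZ_real_rooted (n : ℕ) (x₀ : ℝ) (hx : 0 ≤ x₀) :
    (laguerreZ n x₀).natDegree = n ∧
    (laguerreZ n x₀).roots.card = n ∧
    (laguerreZ n x₀).roots.Nodup := by
  have hc : ((n.factorial : ℝ))⁻¹ ≠ 0 :=
    inv_ne_zero (Nat.cast_ne_zero.mpr n.factorial_ne_zero)
  rcases hx.eq_or_lt with h0 | hpos
  · -- x₀ = 0
    refine final_form n _ hc (fun i => -(1 + (i : ℝ))) ?_ _ ?_
    · intro i j _ _ hij
      have : (i : ℝ) = j := by linarith [neg_injective hij]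
      exact_mod_cast this
    · rw [laguerreZ_eq, ← h0, lagP_zero_prod]
  · -- x₀ > 0
    obtain ⟨s, hgap, hlow, hrep⟩ := lagP_prod x₀ hpos n
    have hmono : ∀ i j, i < j → j < n → s i < s j := by
      intro i j h1 h2
      have := gap_lt s n hgap j i h1 h2
      linarith
    refine final_form n _ hc s ?_ _ ?_
    · intro i j hi hj hij
      by_contra hne
      rcases Nat.lt_or_ge i j with h | h
      · exact absurd hij (ne_of_lt (hmono i j h hj))
      · exact absurd hij.symm (ne_of_lt (hmono j i (lt_of_le_of_ne h (Ne.symm hne)) hi))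
    · rw [laguerreZ_eq, hrep]
end

section
/- For every x₀ ∈ [−1,1] with x₀ ≠ 0, the Gegenbauer polynomial G_n(x₀, z), regarded as a polynomial in the parameter z, has degree n and all of its roots are real. -/
open Polynomial Finset

/-- The Gegenbauer polynomial `G_n(x₀, z)` viewed as a polynomial in the parameter `z`,
for fixed `x₀`. -/
noncomputable def gegenbauerZ (n : ℕ) (x₀ : ℝ) : Polynomial ℝ :=
  ∑ k ∈ Finset.range (n / 2 + 1),
    Polynomial.C ((-1 : ℝ) ^ k * (2 * x₀) ^ (n - 2 * k) /
      ((k.factorial : ℝ) * ((n - 2 * k).factorial : ℝ))) *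
      ∏ i ∈ Finset.range (n - k), (Polynomial.X + Polynomial.C (i : ℝ))

namespace Gg


/-- product basis -/
noncomputable def W (j : ℕ) : Polynomial ℝ := ∏ i ∈ Finset.range j, (X + C (i : ℝ))

noncomputable def ga (x : ℝ) (n k : ℕ) : ℝ :=
  (-1 : ℝ) ^ k * (2 * x) ^ (n - 2 * k) / ((k.factorial : ℝ) * ((n - 2 * k).factorial : ℝ))

lemma gegen_eq (x : ℝ) (n : ℕ) :
    gegenbauerZ n x = ∑ k ∈ Finset.range (n / 2 + 1), C (ga x n k) * W (n - k) := rfl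

lemma W_succ (j : ℕ) : W (j + 1) = W j * (X + C (j : ℝ)) := Finset.prod_range_succ _ _

lemma fact_ne (k : ℕ) : ((k.factorial : ℝ)) ≠ 0 := by
  exact_mod_cast k.factorial_ne_zero

/-- coefficient identity, k = 0 -/
lemma c0 (x : ℝ) (n : ℕ) : ((n : ℝ) + 2) * ga x (n + 2) 0 = 2 * x * ga x (n + 1) 0 := by
  simp only [ga, Nat.mul_zero, Nat.sub_zero, pow_zero, one_mul, Nat.factorial_zero, Nat.cast_one]
  rw [Nat.factorial_succ (n+1), pow_succ (2*x) (n+1)]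
  push_cast
  field_simp
  ring

/-- coefficient identity, middle terms -/
lemma cmid (x : ℝ) (n k : ℕ) (hk : 1 ≤ k) (hkn : 2 * k ≤ n + 1) :
    ((n : ℝ) + 2) * ga x (n + 2) k = 2 * x * ga x (n + 1) k - 2 * ga x n (k - 1) := by
  obtain ⟨k', rfl⟩ : ∃ k', k = k' + 1 := ⟨k - 1, by omega⟩
  obtain ⟨j, rfl⟩ : ∃ j, n = 2 * k' + 1 + j := ⟨n - (2 * k' + 1), by omega⟩
  simp only [ga]
  rw [show 2 * k' + 1 + j + 2 - 2 * (k' + 1) = j + 1 by omega,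
    show 2 * k' + 1 + j + 1 - 2 * (k' + 1) = j by omega,
    show k' + 1 - 1 = k' by omega,
    show 2 * k' + 1 + j - 2 * k' = j + 1 by omega]
  rw [Nat.factorial_succ (k'), Nat.factorial_succ j, pow_succ (2*x) j, pow_succ (-1:ℝ) k']
  push_cast
  have h1 := fact_ne k'
  have h2 := fact_ne j
  field_simp
  ring

/-- coefficient identity, top term (even case) -/
lemma ctop (x : ℝ) (p : ℕ) :
    ((2 * p : ℝ) + 2) * ga x (2 * p + 2) (p + 1) = -2 * ga x (2 * p) p := by
  simp only [ga]
  rw [show 2 * p + 2 - 2 * (p + 1) = 0 by omega, show 2 * p - 2 * p = 0 by omega,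
    Nat.factorial_succ p, pow_succ (-1:ℝ) p]
  push_cast
  have h1 := fact_ne p
  field_simp

/-- coefficient identity for the cancelling pair -/
lemma cII (x : ℝ) (n k : ℕ) (h : 2 * k + 1 ≤ n) :
    2 * x * ((k : ℝ) + 1) * ga x (n + 1) (k + 1) = -(((n : ℝ) - 2 * k) * ga x n k) := by
  obtain ⟨j, rfl⟩ : ∃ j, n = 2 * k + 1 + j := ⟨n - (2 * k + 1), by omega⟩
  simp only [ga]
  rw [show 2 * k + 1 + j + 1 - 2 * (k + 1) = j by omega,
    show 2 * k + 1 + j - 2 * k = j + 1 by omega,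
    Nat.factorial_succ k, Nat.factorial_succ j, pow_succ (2*x) j, pow_succ (-1:ℝ) k]
  push_cast
  have h1 := fact_ne k
  have h2 := fact_ne j
  field_simp
  ring


lemma CW_ext {a b : ℝ} (j : ℕ) (h : a = b) : C a * W j = C b * W j := by rw [h]

lemma XC_mul_W (a : ℕ) (r : ℝ) : (X + C r) * W a = W (a + 1) + C (r - a) * W a := by
  rw [W_succ, map_sub]; ring

lemma two_XC_mul_W (a : ℕ) (r : ℝ) :
    (2 * X + C r) * W a = 2 * W (a + 1) + C (r - 2 * a) * W a := by
  rw [W_succ, map_sub, map_mul, map_ofNat]; ring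

/-- LHS normal form -/
lemma hLHS_even (x : ℝ) (p : ℕ) :
    C (2 * (p : ℝ) + 2) * (∑ k ∈ range (p + 2), C (ga x (2 * p + 2) k) * W (2 * p + 2 - k))
      = (∑ k ∈ range (p + 1), C (2 * x * ga x (2 * p + 1) k) * W (2 * p + 2 - k))
        - ∑ k ∈ range (p + 1), C (2 * ga x (2 * p) k) * W (2 * p + 1 - k) := by
  rw [Finset.mul_sum]
  simp only [← mul_assoc, ← C_mul]
  rw [Finset.sum_range_succ', Finset.sum_range_succ]
  have e1 : ∀ k ∈ range p,
      C ((2 * (p:ℝ) + 2) * ga x (2 * p + 2) (k + 1)) * W (2 * p + 2 - (k + 1))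
        = C (2 * x * ga x (2 * p + 1) (k + 1)) * W (2 * p + 1 - k)
          - C (2 * ga x (2 * p) k) * W (2 * p + 1 - k) := by
    intro k hk
    have hk' : k < p := Finset.mem_range.mp hk
    have : (2 * (p:ℝ) + 2) * ga x (2 * p + 2) (k + 1)
        = 2 * x * ga x (2 * p + 1) (k + 1) - 2 * ga x (2 * p) k := by
      have := cmid x (2 * p) (k + 1) (by omega) (by omega)
      simpa using this
    rw [show 2 * p + 2 - (k + 1) = 2 * p + 1 - k by omega, this, map_sub, sub_mul]
  rw [Finset.sum_congr rfl e1, Finset.sum_sub_distrib]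
  have e2 : C ((2 * (p:ℝ) + 2) * ga x (2 * p + 2) (p + 1)) * W (2 * p + 2 - (p + 1))
      = -(C (2 * ga x (2 * p) p) * W (2 * p + 1 - p)) := by
    have h := ctop x p
    rw [show 2 * p + 2 - (p + 1) = p + 1 by omega, show 2 * p + 1 - p = p + 1 by omega]
    rw [show (2 * (p:ℝ) + 2) = ((2*p:ℝ) + 2) by push_cast; ring, h]
    rw [show (-2 : ℝ) * ga x (2*p) p = -(2 * ga x (2*p) p) by ring, map_neg, neg_mul]
  have e3 : C ((2 * (p:ℝ) + 2) * ga x (2 * p + 2) 0) * W (2 * p + 2 - 0)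
      = C (2 * x * ga x (2 * p + 1) 0) * W (2 * p + 2) := by
    rw [show (2 * (p:ℝ) + 2) = ((2*p:ℝ) + 2) by push_cast; ring,
      show ((2*p:ℝ) + 2) = ((2*p : ℕ) : ℝ) + 2 by push_cast; ring, c0]
    norm_num
  rw [e2, e3]
  conv_rhs => rw [Finset.sum_range_succ' (fun k => C (2 * x * ga x (2 * p + 1) k) * W (2 * p + 2 - k)) p,
    Finset.sum_range_succ (fun k => C (2 * ga x (2 * p) k) * W (2 * p + 1 - k)) p]
  have e4 : ∀ k ∈ range p,
      C (2 * x * ga x (2 * p + 1) (k+1)) * W (2 * p + 2 - (k+1))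
        = C (2 * x * ga x (2 * p + 1) (k + 1)) * W (2 * p + 1 - k) := by
    intro k hk
    rw [show 2 * p + 2 - (k + 1) = 2 * p + 1 - k by omega]
  rw [Finset.sum_congr rfl e4]
  simp only [Nat.sub_zero]
  ring

/-- RHS first piece normal form -/
lemma hRHS1 (x : ℝ) (p N : ℕ) (hN : ∀ k, k < N → k ≤ 2 * p) :
    C (2 * x) * ((X + C (2 * (p : ℝ) + 1)) * ∑ k ∈ range N, C (ga x (2 * p + 1) k) * W (2 * p + 1 - k))
      = (∑ k ∈ range N, C (2 * x * ga x (2 * p + 1) k) * W (2 * p + 2 - k))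
        + ∑ k ∈ range N, C (2 * x * (k : ℝ) * ga x (2 * p + 1) k) * W (2 * p + 1 - k) := by
  rw [Finset.mul_sum, Finset.mul_sum, ← Finset.sum_add_distrib]
  refine Finset.sum_congr rfl fun k hk => ?_
  have hk' : k ≤ 2 * p := hN k (Finset.mem_range.mp hk)
  have h1 : C (2*x) * ((X + C (2 * (p:ℝ) + 1)) * (C (ga x (2*p+1) k) * W (2*p+1-k)))
      = C (2 * x * ga x (2*p+1) k) * ((X + C (2 * (p:ℝ) + 1)) * W (2*p+1-k)) := by
    conv_rhs => rw [C_mul]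
    ring
  rw [h1, XC_mul_W]
  have h2 : (2 * (p:ℝ) + 1) - ((2*p+1-k : ℕ) : ℝ) = (k : ℝ) := by
    rw [Nat.cast_sub (by omega)]; push_cast; ring
  rw [h2, show 2*p+1-k+1 = 2*p+2-k by omega, mul_add]
  congr 1
  rw [← mul_assoc, ← C_mul]
  exact CW_ext _ (by ring)

/-- RHS second piece normal form -/
lemma hRHS2 (x : ℝ) (p N : ℕ) (hN : ∀ k, k < N → k ≤ 2 * p) (r : ℝ) :
    (2 * X + C r) * ∑ k ∈ range N, C (ga x (2 * p) k) * W (2 * p - k)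
      = (∑ k ∈ range N, C (2 * ga x (2 * p) k) * W (2 * p + 1 - k))
        + ∑ k ∈ range N, C ((r - 2 * ((2 * p : ℝ) - (k:ℝ))) * ga x (2 * p) k) * W (2 * p - k) := by
  rw [Finset.mul_sum, ← Finset.sum_add_distrib]
  refine Finset.sum_congr rfl fun k hk => ?_
  have hk' : k ≤ 2 * p := hN k (Finset.mem_range.mp hk)
  have h1 : (2 * X + C r) * (C (ga x (2*p) k) * W (2*p-k))
      = C (ga x (2*p) k) * ((2 * X + C r) * W (2*p-k)) := by ring
  rw [h1, two_XC_mul_W]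
  have h2 : (r - 2 * ((2*p-k : ℕ) : ℝ)) = r - 2 * ((2 * p : ℝ) - (k:ℝ)) := by
    rw [Nat.cast_sub (by omega)]; push_cast; ring
  rw [h2, show 2*p-k+1 = 2*p+1-k by omega, mul_add]
  congr 1
  · rw [map_mul, map_ofNat]; ring
  · rw [← mul_assoc, ← C_mul]
    exact CW_ext _ (by ring)

/-- the cancelling pair, even case -/
lemma claimA_even (x : ℝ) (p : ℕ) :
    (∑ k ∈ range (p+1), C (2 * x * (k : ℝ) * ga x (2 * p + 1) k) * W (2 * p + 1 - k))
      = ∑ k ∈ range (p+1), C (((2 * p : ℝ) - 2 * ((2 * p : ℝ) - (k:ℝ))) * ga x (2 * p) k) * W (2 * p - k) := by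
  rw [Finset.sum_range_succ', Finset.sum_range_succ]
  have z1 : C (2 * x * ((0:ℕ) : ℝ) * ga x (2 * p + 1) 0) * W (2 * p + 1 - 0) = 0 := by
    norm_num
  have z2 : C (((2 * p : ℝ) - 2 * ((2 * p : ℝ) - ((p:ℕ):ℝ))) * ga x (2 * p) p) * W (2 * p - p) = 0 := by
    have h0 : ((2 * p : ℝ) - 2 * ((2 * p : ℝ) - ((p:ℕ):ℝ))) * ga x (2 * p) p
        = (2 * (p:ℝ) - 2 * (p:ℝ)) * ga x (2 * p) p := by push_cast; ring
    rw [h0]; norm_num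
  rw [z1, z2, add_zero, add_zero]
  refine Finset.sum_congr rfl fun k hk => ?_
  have hk' : k < p := Finset.mem_range.mp hk
  rw [show 2 * p + 1 - (k+1) = 2 * p - k by omega]
  refine CW_ext _ ?_
  have h := cII x (2*p) k (by omega)
  push_cast at h ⊢
  linarith [h]

/-- Gegenbauer three-term recurrence, even index -/
lemma B_even (x : ℝ) (p : ℕ) :
    C (2 * (p : ℝ) + 2) * gegenbauerZ (2 * p + 2) x
      = C (2 * x) * ((X + C (2 * (p : ℝ) + 1)) * gegenbauerZ (2 * p + 1) x)
        - (2 * X + C ((2 * p : ℝ))) * gegenbauerZ (2 * p) x := by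
  rw [gegen_eq x (2*p+2), gegen_eq x (2*p+1), gegen_eq x (2*p),
    show (2*p+2)/2 + 1 = p+2 by omega, show (2*p+1)/2 + 1 = p+1 by omega,
    show (2*p)/2 + 1 = p+1 by omega]
  rw [hLHS_even, hRHS1 x p (p+1) (fun k hk => by omega),
    hRHS2 x p (p+1) (fun k hk => by omega) ((2*p:ℝ))]
  have := claimA_even x p
  linear_combination -this

/-- LHS normal form, odd -/
lemma hLHS_odd (x : ℝ) (p : ℕ) :
    C (2 * (p : ℝ) + 3) * (∑ k ∈ range (p + 2), C (ga x (2 * p + 3) k) * W (2 * p + 3 - k))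
      = (∑ k ∈ range (p + 2), C (2 * x * ga x (2 * p + 2) k) * W (2 * p + 3 - k))
        - ∑ k ∈ range (p + 1), C (2 * ga x (2 * p + 1) k) * W (2 * p + 2 - k) := by
  rw [Finset.mul_sum]
  simp only [← mul_assoc, ← C_mul]
  rw [Finset.sum_range_succ']
  have e1 : ∀ k ∈ range (p + 1),
      C ((2 * (p:ℝ) + 3) * ga x (2 * p + 3) (k + 1)) * W (2 * p + 3 - (k + 1))
        = C (2 * x * ga x (2 * p + 2) (k + 1)) * W (2 * p + 2 - k)
          - C (2 * ga x (2 * p + 1) k) * W (2 * p + 2 - k) := by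
    intro k hk
    have hk' : k < p + 1 := Finset.mem_range.mp hk
    have h : (2 * (p:ℝ) + 3) * ga x (2 * p + 3) (k + 1)
        = 2 * x * ga x (2 * p + 2) (k + 1) - 2 * ga x (2 * p + 1) k := by
      have := cmid x (2 * p + 1) (k + 1) (by omega) (by omega)
      rw [show 2*p+1+2 = 2*p+3 by omega, show 2*p+1+1 = 2*p+2 by omega] at this
      rw [show ((2*p+1 : ℕ) : ℝ) + 2 = 2 * (p:ℝ) + 3 by push_cast; ring] at this
      simpa using this
    rw [show 2 * p + 3 - (k + 1) = 2 * p + 2 - k by omega, h, map_sub, sub_mul]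
  rw [Finset.sum_congr rfl e1, Finset.sum_sub_distrib]
  have e3 : C ((2 * (p:ℝ) + 3) * ga x (2 * p + 3) 0) * W (2 * p + 3 - 0)
      = C (2 * x * ga x (2 * p + 2) 0) * W (2 * p + 3) := by
    have := c0 x (2*p+1)
    rw [show 2*p+1+2 = 2*p+3 by omega, show 2*p+1+1 = 2*p+2 by omega] at this
    rw [show ((2*p+1 : ℕ) : ℝ) + 2 = 2 * (p:ℝ) + 3 by push_cast; ring] at this
    rw [this]
    norm_num
  rw [e3]
  conv_rhs => rw [Finset.sum_range_succ'
    (fun k => C (2 * x * ga x (2 * p + 2) k) * W (2 * p + 3 - k)) (p + 1)]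
  have e4 : ∀ k ∈ range (p + 1),
      C (2 * x * ga x (2 * p + 2) (k+1)) * W (2 * p + 3 - (k+1))
        = C (2 * x * ga x (2 * p + 2) (k + 1)) * W (2 * p + 2 - k) := by
    intro k hk
    rw [show 2 * p + 3 - (k + 1) = 2 * p + 2 - k by omega]
  rw [Finset.sum_congr rfl e4]
  simp only [Nat.sub_zero]
  ring

lemma hRHS1_odd (x : ℝ) (p N : ℕ) (hN : ∀ k, k < N → k ≤ 2 * p + 2) :
    C (2 * x) * ((X + C (2 * (p : ℝ) + 2)) * ∑ k ∈ range N, C (ga x (2 * p + 2) k) * W (2 * p + 2 - k))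
      = (∑ k ∈ range N, C (2 * x * ga x (2 * p + 2) k) * W (2 * p + 3 - k))
        + ∑ k ∈ range N, C (2 * x * (k : ℝ) * ga x (2 * p + 2) k) * W (2 * p + 2 - k) := by
  rw [Finset.mul_sum, Finset.mul_sum, ← Finset.sum_add_distrib]
  refine Finset.sum_congr rfl fun k hk => ?_
  have hk' : k ≤ 2 * p + 2 := hN k (Finset.mem_range.mp hk)
  have h1 : C (2*x) * ((X + C (2 * (p:ℝ) + 2)) * (C (ga x (2*p+2) k) * W (2*p+2-k)))
      = C (2 * x * ga x (2*p+2) k) * ((X + C (2 * (p:ℝ) + 2)) * W (2*p+2-k)) := by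
    conv_rhs => rw [C_mul]
    ring
  rw [h1, XC_mul_W]
  have h2 : (2 * (p:ℝ) + 2) - ((2*p+2-k : ℕ) : ℝ) = (k : ℝ) := by
    rw [Nat.cast_sub (by omega)]; push_cast; ring
  rw [h2, show 2*p+2-k+1 = 2*p+3-k by omega, mul_add]
  congr 1
  rw [← mul_assoc, ← C_mul]
  exact CW_ext _ (by ring)

lemma hRHS2_odd (x : ℝ) (p N : ℕ) (hN : ∀ k, k < N → k ≤ 2 * p + 1) (r : ℝ) :
    (2 * X + C r) * ∑ k ∈ range N, C (ga x (2 * p + 1) k) * W (2 * p + 1 - k)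
      = (∑ k ∈ range N, C (2 * ga x (2 * p + 1) k) * W (2 * p + 2 - k))
        + ∑ k ∈ range N, C ((r - 2 * (2 * (p:ℝ) + 1 - (k:ℝ))) * ga x (2 * p + 1) k) * W (2 * p + 1 - k) := by
  rw [Finset.mul_sum, ← Finset.sum_add_distrib]
  refine Finset.sum_congr rfl fun k hk => ?_
  have hk' : k ≤ 2 * p + 1 := hN k (Finset.mem_range.mp hk)
  have h1 : (2 * X + C r) * (C (ga x (2*p+1) k) * W (2*p+1-k))
      = C (ga x (2*p+1) k) * ((2 * X + C r) * W (2*p+1-k)) := by ring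
  rw [h1, two_XC_mul_W]
  have h2 : (r - 2 * ((2*p+1-k : ℕ) : ℝ)) = r - 2 * (2 * (p:ℝ) + 1 - (k:ℝ)) := by
    rw [Nat.cast_sub (by omega)]; push_cast; ring
  rw [h2, show 2*p+1-k+1 = 2*p+2-k by omega, mul_add]
  congr 1
  · rw [map_mul, map_ofNat]; ring
  · rw [← mul_assoc, ← C_mul]
    exact CW_ext _ (by ring)

/-- the cancelling pair, odd case -/
lemma claimA_odd (x : ℝ) (p : ℕ) :
    (∑ k ∈ range (p+2), C (2 * x * (k : ℝ) * ga x (2 * p + 2) k) * W (2 * p + 2 - k))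
      = ∑ k ∈ range (p+1), C (((2 * (p:ℝ) + 1) - 2 * (2 * (p:ℝ) + 1 - (k:ℝ))) * ga x (2 * p + 1) k) * W (2 * p + 1 - k) := by
  rw [Finset.sum_range_succ']
  have z1 : C (2 * x * ((0:ℕ) : ℝ) * ga x (2 * p + 2) 0) * W (2 * p + 2 - 0) = 0 := by
    norm_num
  rw [z1, add_zero]
  refine Finset.sum_congr rfl fun k hk => ?_
  have hk' : k < p + 1 := Finset.mem_range.mp hk
  rw [show 2 * p + 2 - (k+1) = 2 * p + 1 - k by omega]
  refine CW_ext _ ?_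
  have h := cII x (2*p+1) k (by omega)
  push_cast at h ⊢
  linarith [h]

/-- Gegenbauer three-term recurrence, odd index -/
lemma B_odd (x : ℝ) (p : ℕ) :
    C (2 * (p : ℝ) + 3) * gegenbauerZ (2 * p + 3) x
      = C (2 * x) * ((X + C (2 * (p : ℝ) + 2)) * gegenbauerZ (2 * p + 2) x)
        - (2 * X + C (2 * (p:ℝ) + 1)) * gegenbauerZ (2 * p + 1) x := by
  rw [gegen_eq x (2*p+3), gegen_eq x (2*p+2), gegen_eq x (2*p+1),
    show (2*p+3)/2 + 1 = p+2 by omega, show (2*p+2)/2 + 1 = p+2 by omega,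
    show (2*p+1)/2 + 1 = p+1 by omega]
  rw [hLHS_odd, hRHS1_odd x p (p+2) (fun k hk => by omega),
    hRHS2_odd x p (p+1) (fun k hk => by omega) (2 * (p:ℝ) + 1)]
  have := claimA_odd x p
  linear_combination -this


noncomputable def gu (x : ℝ) : ℝ := ((2*x)^2)⁻¹
noncomputable def gb (x : ℝ) (n k : ℕ) : ℝ :=
  (-1 : ℝ)^k * (n.factorial : ℝ) * (gu x)^k / ((k.factorial : ℝ) * ((n - 2*k).factorial : ℝ))
noncomputable def G (n : ℕ) : Polynomial ℝ := ∏ j ∈ Finset.range ((n+1)/2), (X + C (j : ℝ))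
noncomputable def V (n k : ℕ) : Polynomial ℝ := ∏ i ∈ Finset.Ico ((n+1)/2) (n-k), (X + C (i : ℝ))
noncomputable def R (x : ℝ) (n : ℕ) : Polynomial ℝ := ∑ k ∈ Finset.range (n/2+1), C (gb x n k) * V n k

lemma W_split (n k : ℕ) (h : k ≤ n/2) : W (n-k) = G n * V n k := by
  rw [W, G, V]
  simp only [Finset.range_eq_Ico]
  exact (Finset.prod_Ico_consecutive _ (Nat.zero_le _) (by omega)).symm

lemma ga_eq_gb (x : ℝ) (hx : x ≠ 0) (n k : ℕ) (h : 2*k ≤ n) :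
    ga x n k = (2*x)^n / (n.factorial : ℝ) * gb x n k := by
  have hy : (2*x) ≠ 0 := by simpa using hx
  have hpow : (2*x)^(n - 2*k) * ((2*x)^2)^k = (2*x)^n := by
    rw [← pow_mul, ← pow_add]; congr 1; omega
  rw [ga, gb, gu]
  rw [inv_pow, div_mul_div_comm]
  rw [div_eq_div_iff (by positivity) (by positivity)]
  field_simp
  rw [← hpow]
  ring

lemma V_monic (n k : ℕ) : (V n k).Monic :=
  monic_prod_of_monic _ _ (fun i _ => monic_X_add_C _)

lemma G_monic (n : ℕ) : (G n).Monic :=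
  monic_prod_of_monic _ _ (fun i _ => monic_X_add_C _)

lemma V_natDegree (n k : ℕ) : (V n k).natDegree = (n-k) - (n+1)/2 := by
  rw [V, natDegree_prod_of_monic _ _ (fun i _ => monic_X_add_C _)]
  simp only [natDegree_X_add_C, Finset.sum_const, smul_eq_mul, mul_one, Nat.card_Ico]

lemma gb_zero (x : ℝ) (n : ℕ) : gb x n 0 = 1 := by
  simp [gb, div_self (fact_ne n)]

lemma R_monic (x : ℝ) (n : ℕ) : (R x n).Monic ∧ (R x n).natDegree = n/2 := by
  have hV0 : (V n 0).natDegree = n/2 := by rw [V_natDegree]; omega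
  have hV0m : (V n 0).Monic := V_monic n 0
  have hdeg : (V n 0).degree = (n/2 : ℕ) := by
    rw [Polynomial.degree_eq_natDegree hV0m.ne_zero, hV0]
  have hrest : (∑ k ∈ Finset.range (n/2), C (gb x n (k+1)) * V n (k+1)).degree < (n/2 : ℕ) := by
    refine lt_of_le_of_lt (Polynomial.degree_sum_le _ _) ?_
    rw [Finset.sup_lt_iff (by exact_mod_cast WithBot.bot_lt_coe (n/2))]
    intro k hk
    have hk' : k < n/2 := Finset.mem_range.mp hk
    calc (C (gb x n (k+1)) * V n (k+1)).degree ≤ (V n (k+1)).degree := by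
            rcases eq_or_ne (gb x n (k+1)) 0 with h|h
            · simp [h]
            · rw [Polynomial.degree_C_mul h]
      _ ≤ ((V n (k+1)).natDegree : WithBot ℕ) := Polynomial.degree_le_natDegree
      _ < (n/2 : ℕ) := by
            rw [V_natDegree]
            exact_mod_cast WithBot.coe_lt_coe.mpr (by omega)
  have hR : R x n = V n 0 + ∑ k ∈ Finset.range (n/2), C (gb x n (k+1)) * V n (k+1) := by
    rw [R, Finset.sum_range_succ']
    rw [gb_zero, map_one, one_mul, add_comm]
  constructor
  · rw [hR]
    exact hV0m.add_of_left (by rw [hdeg]; exact hrest)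
  · rw [hR, natDegree_eq_of_degree_eq (degree_add_eq_left_of_degree_lt (by rw [hdeg]; exact hrest)), hV0]


lemma factorization (x : ℝ) (hx : x ≠ 0) (n : ℕ) :
    gegenbauerZ n x = C ((2*x)^n / (n.factorial : ℝ)) * (G n * R x n) := by
  rw [gegen_eq, R, Finset.mul_sum, Finset.mul_sum]
  refine Finset.sum_congr rfl fun k hk => ?_
  have hk' : k ≤ n/2 := by have := Finset.mem_range.mp hk; omega
  rw [W_split n k hk', ga_eq_gb x hx n k (by omega), C_mul]
  ring

lemma G_even_succ (m : ℕ) : G (2*m+2) = G (2*m+1) := by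
  rw [G, G, show (2*m+2+1)/2 = m+1 by omega, show (2*m+1+1)/2 = m+1 by omega]

lemma G_odd_succ (m : ℕ) : G (2*m+1) = G (2*m) * (X + C ((m:ℝ))) := by
  rw [G, G, show (2*m+1+1)/2 = m+1 by omega, show (2*m+1)/2 = m by omega, Finset.prod_range_succ]

lemma G_odd_succ' (m : ℕ) : G (2*m+3) = G (2*m+2) * (X + C ((m:ℝ)+1)) := by
  rw [G, G, show (2*m+3+1)/2 = m+2 by omega, show (2*m+2+1)/2 = m+1 by omega,
    Finset.prod_range_succ]
  norm_num

lemma G_ne (n : ℕ) : G n ≠ 0 := (G_monic n).ne_zero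

lemma cancel_CsG (s : ℝ) (hs : s ≠ 0) (Gp A B : Polynomial ℝ) (hG : Gp ≠ 0)
    (h : C s * (Gp * A) = C s * (Gp * B)) : A = B := by
  have h1 : (C s * Gp) * A = (C s * Gp) * B := by
    rw [mul_assoc, mul_assoc]; exact h
  exact mul_left_cancel₀ (mul_ne_zero (by simpa using hs) hG) h1

lemma C_two_mul (r : ℝ) : C (2 * r) = 2 * C r := by
  rw [C_mul, map_ofNat]

/-- even-index recurrence for R -/
lemma R_even (x : ℝ) (hx : x ≠ 0) (m : ℕ) :
    R x (2*m+2) = (X + C (2*(m:ℝ)+1)) * R x (2*m+1) - C ((4*(m:ℝ)+2) * gu x) * R x (2*m) := by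
  have hy : (2*x) ≠ 0 := by simpa using hx
  set s : ℝ := (2*x)^(2*m+2) / ((2*m+1).factorial : ℝ) with hs_def
  have hs : s ≠ 0 := div_ne_zero (pow_ne_zero _ hy) (fact_ne _)
  apply cancel_CsG s hs (G (2*m+1)) _ _ (G_ne _)
  have e1 : C (2 * (m:ℝ) + 2) * gegenbauerZ (2*m+2) x = C s * (G (2*m+1) * R x (2*m+2)) := by
    rw [factorization x hx (2*m+2), G_even_succ, ← mul_assoc, ← C_mul]
    have : (2 * (m:ℝ) + 2) * ((2*x)^(2*m+2) / ((2*m+2).factorial : ℝ)) = s := by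
      rw [hs_def, show 2*m+2 = (2*m+1)+1 by omega, Nat.factorial_succ]
      push_cast
      field_simp
      ring
    rw [this]
  have e2 : C (2*x) * ((X + C (2*(m:ℝ)+1)) * gegenbauerZ (2*m+1) x)
      = C s * (G (2*m+1) * ((X + C (2*(m:ℝ)+1)) * R x (2*m+1))) := by
    rw [factorization x hx (2*m+1)]
    have : s = 2*x * ((2*x)^(2*m+1) / ((2*m+1).factorial : ℝ)) := by
      rw [hs_def, show 2*m+2 = (2*m+1)+1 by omega, pow_succ]
      field_simp
    conv_rhs => rw [this, C_mul]
    ring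
  have e3 : (2 * X + C ((2 * m : ℝ))) * gegenbauerZ (2*m) x
      = C s * (G (2*m+1) * (C ((4*(m:ℝ)+2) * gu x) * R x (2*m))) := by
    rw [factorization x hx (2*m), G_odd_succ]
    have hXC : (2 * X + C ((2 * m : ℝ))) = 2 * (X + C ((m:ℝ))) := by
      rw [C_two_mul]; ring
    have hsc : s * ((4*(m:ℝ)+2) * gu x) = 2 * ((2*x)^(2*m) / ((2*m).factorial : ℝ)) := by
      rw [hs_def, gu, show 2*m+2 = (2*m+1)+1 by omega, pow_succ, Nat.factorial_succ]
      push_cast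
      field_simp
      ring
    calc (2 * X + C ((2 * m : ℝ))) * (C ((2*x)^(2*m) / ((2*m).factorial : ℝ)) * (G (2*m) * R x (2*m)))
        = C (2 * ((2*x)^(2*m) / ((2*m).factorial : ℝ))) * ((X + C ((m:ℝ))) * (G (2*m) * R x (2*m))) := by
          rw [hXC, C_two_mul]; ring
      _ = C (s * ((4*(m:ℝ)+2) * gu x)) * ((X + C ((m:ℝ))) * (G (2*m) * R x (2*m))) := by rw [hsc]
      _ = C s * (G (2*m) * (X + C ((m:ℝ))) * (C ((4*(m:ℝ)+2) * gu x) * R x (2*m))) := by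
          rw [C_mul]; ring
  have hB := B_even x m
  rw [e1, e2, e3] at hB
  rw [hB, ← mul_sub, ← mul_sub]

/-- odd-index recurrence for R -/
lemma R_odd (x : ℝ) (hx : x ≠ 0) (m : ℕ) :
    (X + C ((m:ℝ)+1)) * R x (2*m+3)
      = (X + C (2*(m:ℝ)+2)) * R x (2*m+2)
        - C ((4*(m:ℝ)+4) * gu x) * ((X + C ((2*(m:ℝ)+1)/2)) * R x (2*m+1)) := by
  have hy : (2*x) ≠ 0 := by simpa using hx
  set s : ℝ := (2*x)^(2*m+3) / ((2*m+2).factorial : ℝ) with hs_def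
  have hs : s ≠ 0 := div_ne_zero (pow_ne_zero _ hy) (fact_ne _)
  apply cancel_CsG s hs (G (2*m+2)) _ _ (G_ne _)
  have e1 : C (2 * (m:ℝ) + 3) * gegenbauerZ (2*m+3) x
      = C s * (G (2*m+2) * ((X + C ((m:ℝ)+1)) * R x (2*m+3))) := by
    rw [factorization x hx (2*m+3), G_odd_succ']
    have : (2 * (m:ℝ) + 3) * ((2*x)^(2*m+3) / ((2*m+3).factorial : ℝ)) = s := by
      rw [hs_def, show 2*m+3 = (2*m+2)+1 by omega, Nat.factorial_succ]
      push_cast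
      field_simp
      ring
    rw [← this, C_mul]
    ring
  have e2 : C (2*x) * ((X + C (2*(m:ℝ)+2)) * gegenbauerZ (2*m+2) x)
      = C s * (G (2*m+2) * ((X + C (2*(m:ℝ)+2)) * R x (2*m+2))) := by
    rw [factorization x hx (2*m+2)]
    have : s = 2*x * ((2*x)^(2*m+2) / ((2*m+2).factorial : ℝ)) := by
      rw [hs_def, show 2*m+3 = (2*m+2)+1 by omega, pow_succ]
      field_simp
    conv_rhs => rw [this, C_mul]
    ring
  have e3 : (2 * X + C (2 * (m:ℝ) + 1)) * gegenbauerZ (2*m+1) x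
      = C s * (G (2*m+2) * (C ((4*(m:ℝ)+4) * gu x) * ((X + C ((2*(m:ℝ)+1)/2)) * R x (2*m+1)))) := by
    rw [factorization x hx (2*m+1), G_even_succ]
    have hXC : (2 * X + C (2 * (m:ℝ) + 1)) = 2 * (X + C ((2*(m:ℝ)+1)/2)) := by
      have h9 : (2:Polynomial ℝ) * C ((2*(m:ℝ)+1)/2) = C (2 * (m:ℝ) + 1) := by
        rw [← C_two_mul]
        congr 1
        ring
      rw [← h9]; ring
    have hsc : s * ((4*(m:ℝ)+4) * gu x) = 2 * ((2*x)^(2*m+1) / ((2*m+1).factorial : ℝ)) := by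
      rw [hs_def, gu, show 2*m+3 = (2*m+1)+2 by omega, pow_add, show 2*m+2 = (2*m+1)+1 by omega,
        Nat.factorial_succ]
      push_cast
      field_simp
      ring
    calc (2 * X + C (2 * (m:ℝ) + 1)) * (C ((2*x)^(2*m+1) / ((2*m+1).factorial : ℝ)) * (G (2*m+1) * R x (2*m+1)))
        = C (2 * ((2*x)^(2*m+1) / ((2*m+1).factorial : ℝ))) * ((X + C ((2*(m:ℝ)+1)/2)) * (G (2*m+1) * R x (2*m+1))) := by
          rw [hXC, C_two_mul]; ring
      _ = C (s * ((4*(m:ℝ)+4) * gu x)) * ((X + C ((2*(m:ℝ)+1)/2)) * (G (2*m+1) * R x (2*m+1))) := by rw [hsc]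
      _ = C s * (G (2*m+1) * (C ((4*(m:ℝ)+4) * gu x) * ((X + C ((2*(m:ℝ)+1)/2)) * R x (2*m+1)))) := by
          rw [C_mul]; ring
  have hB := B_odd x m
  rw [e1, e2, e3] at hB
  rw [← mul_sub, ← mul_sub] at hB
  exact hB


lemma R_zero (x : ℝ) : R x 0 = 1 := by
  rw [R]
  norm_num [V, gb_zero]

lemma R_one (x : ℝ) : R x 1 = 1 := by
  rw [R]
  norm_num [V, gb_zero]

lemma Dj (j : ℕ) : ∏ i ∈ Finset.range j, ((2*(i:ℝ)+1)/2)
    = ((2*j).factorial : ℝ) / (4^j * (j.factorial : ℝ)) := by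
  induction j with
  | zero => norm_num
  | succ j ih =>
    rw [Finset.prod_range_succ, ih,
      show 2*(j+1) = (2*j+1)+1 by omega, Nat.factorial_succ ((2*j)+1), Nat.factorial_succ (2*j),
      Nat.factorial_succ j, pow_succ]
    push_cast
    field_simp
    ring

lemma eval_V (m k : ℕ) (hk : k ≤ m) :
    (V (2*m) k).eval (-(2*(m:ℝ)-1)/2) = ∏ i ∈ Finset.range (m-k), ((2*(i:ℝ)+1)/2) := by
  rw [V, show (2*m+1)/2 = m by omega, eval_prod]
  rw [Finset.prod_Ico_eq_prod_range]
  rw [show 2*m - k - m = m - k by omega]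
  refine Finset.prod_congr rfl fun i hi => ?_
  rw [eval_add, eval_X, eval_C]
  push_cast
  ring

lemma eval_R_even (x : ℝ) (m : ℕ) :
    (R x (2*m)).eval (-(2*(m:ℝ)-1)/2)
      = ((2*m).factorial : ℝ) / (4^m * (m.factorial : ℝ)) * (1 - 4 * gu x)^m := by
  rw [R, show (2*m)/2 + 1 = m + 1 by omega, eval_finset_sum]
  rw [show (1 - 4*gu x) = (-(4*gu x)) + 1 by ring, add_pow, Finset.mul_sum]
  refine Finset.sum_congr rfl fun k hk => ?_
  have hk' : k ≤ m := by have := Finset.mem_range.mp hk; omega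
  rw [eval_mul, eval_C, eval_V m k hk', Dj (m-k)]
  obtain ⟨j, rfl⟩ : ∃ j, m = k + j := ⟨m - k, by omega⟩
  rw [gb, show k + j - k = j by omega, show 2*(k+j) - 2*k = 2*j by omega]
  rw [Nat.cast_choose ℝ (show k ≤ k + j by omega), show k + j - k = j by omega]
  rw [one_pow, neg_pow (4 * gu x) k, mul_pow, pow_add (4:ℝ) k j]
  field_simp

/-- sign of a product of linear factors -/
lemma SGN (γ : ℕ → ℝ) (c : ℝ) (M cnt : ℕ) (hcnt : cnt ≤ M)
    (h1 : ∀ j, j < cnt → γ j < c) (h2 : ∀ j, cnt ≤ j → j < M → c < γ j) :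
    0 < (-1:ℝ)^(M - cnt) * ∏ j ∈ Finset.range M, (c - γ j) := by
  rw [Finset.range_eq_Ico, ← Finset.prod_Ico_consecutive _ (Nat.zero_le cnt) hcnt]
  have hpos : 0 < ∏ j ∈ Finset.Ico 0 cnt, (c - γ j) :=
    Finset.prod_pos fun j hj => by
      have := (Finset.mem_Ico.mp hj).2
      have := h1 j this
      linarith
  have hneg : ∏ j ∈ Finset.Ico cnt M, (c - γ j)
      = (-1:ℝ)^(M - cnt) * ∏ j ∈ Finset.Ico cnt M, (γ j - c) := by
    rw [← Nat.card_Ico cnt M, ← Finset.prod_const (-1:ℝ), ← Finset.prod_mul_distrib]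
    exact Finset.prod_congr rfl fun j hj => by ring
  rw [hneg]
  have hpos2 : 0 < ∏ j ∈ Finset.Ico cnt M, (γ j - c) :=
    Finset.prod_pos fun j hj => by
      have h := Finset.mem_Ico.mp hj
      have := h2 j h.1 h.2
      linarith
  have hsq : (-1:ℝ)^(M-cnt) * (-1:ℝ)^(M-cnt) = 1 := by
    rw [← pow_add]
    exact Even.neg_one_pow ⟨M - cnt, by omega⟩
  have key : (-1:ℝ)^(M-cnt) * ((∏ j ∈ Finset.Ico 0 cnt, (c - γ j)) * ((-1:ℝ)^(M-cnt) * ∏ j ∈ Finset.Ico cnt M, (γ j - c)))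
      = ((∏ j ∈ Finset.Ico 0 cnt, (c - γ j)) * ∏ j ∈ Finset.Ico cnt M, (γ j - c))
        * ((-1:ℝ)^(M-cnt) * (-1:ℝ)^(M-cnt)) := by ring
  rw [key, hsq, mul_one]
  exact mul_pos hpos hpos2

lemma ivt_neg (f : Polynomial ℝ) (a b : ℝ) (hab : a < b) (hs : f.eval a * f.eval b < 0) :
    ∃ c, a < c ∧ c < b ∧ f.eval c = 0 := by
  have hcont : ContinuousOn (fun y => f.eval y) (Set.Icc a b) :=
    (Polynomial.continuous f).continuousOn
  rcases mul_neg_iff.mp hs with ⟨h1, h2⟩ | ⟨h1, h2⟩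
  · have : (0:ℝ) ∈ Set.Ioo (f.eval b) (f.eval a) := ⟨h2, h1⟩
    obtain ⟨c, hc, hfc⟩ := intermediate_value_Ioo' (le_of_lt hab) hcont this
    exact ⟨c, hc.1, hc.2, hfc⟩
  · have : (0:ℝ) ∈ Set.Ioo (f.eval a) (f.eval b) := ⟨h1, h2⟩
    obtain ⟨c, hc, hfc⟩ := intermediate_value_Ioo (le_of_lt hab) hcont this
    exact ⟨c, hc.1, hc.2, hfc⟩

lemma exists_big (f : Polynomial ℝ) (hm : f.Monic) (hd : 0 < f.natDegree) (a : ℝ) :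
    ∃ b, a < b ∧ 0 < f.eval b := by
  have hdeg : 0 < f.degree := by
    rw [Polynomial.degree_eq_natDegree hm.ne_zero]
    exact_mod_cast hd
  have ht : Filter.Tendsto (fun y => f.eval y) Filter.atTop Filter.atTop :=
    f.tendsto_atTop_of_leadingCoeff_nonneg hdeg (by rw [hm.leadingCoeff]; norm_num)
  have h1 : ∀ᶠ y in Filter.atTop, 0 < f.eval y := ht.eventually_gt_atTop 0
  have h2 : ∀ᶠ y in Filter.atTop, a < y := Filter.eventually_gt_atTop a
  obtain ⟨b, hb1, hb2⟩ := (h2.and h1).exists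
  exact ⟨b, hb1, hb2⟩

/-- root construction from alternating signs -/
lemma RC (p : Polynomial ℝ) (N : ℕ) (hm : p.Monic) (hdeg : p.natDegree = N) (hN : 1 ≤ N)
    (t : ℕ → ℝ) (ht : ∀ i j, i < j → j < N → t i < t j)
    (hsign : ∀ i, i < N → 0 < (-1:ℝ)^(N-i) * p.eval (t i)) :
    ∃ ρ : ℕ → ℝ, p = ∏ i ∈ Finset.range N, (X - C (ρ i)) ∧ (∀ i, i < N → t i < ρ i) ∧
      (∀ i j, i < j → j < N → ρ i < t j) := by
  have hroot : ∀ i : ℕ, ∃ r : ℝ, i < N →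
      (t i < r ∧ (i+1 < N → r < t (i+1)) ∧ p.eval r = 0) := by
    intro i
    by_cases hi : i < N
    · by_cases hi1 : i + 1 < N
      · -- interior sign change
        have s1 := hsign i hi
        have s2 := hsign (i+1) hi1
        have hmul : p.eval (t i) * p.eval (t (i+1)) < 0 := by
          have he : (N - i) = (N - (i+1)) + 1 := by omega
          rw [he, pow_succ] at s1
          nlinarith [sq_nonneg ((-1:ℝ)^(N-(i+1)))]
        obtain ⟨c, hc1, hc2, hc3⟩ := ivt_neg p (t i) (t (i+1)) (ht i (i+1) (by omega) hi1) hmul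
        exact ⟨c, fun _ => ⟨hc1, fun _ => hc2, hc3⟩⟩
      · -- last root
        have s1 := hsign i hi
        rw [show N - i = 1 by omega] at s1
        have hneg : p.eval (t i) < 0 := by nlinarith
        obtain ⟨b, hb1, hb2⟩ := exists_big p hm (by omega) (t i)
        have hmul : p.eval (t i) * p.eval b < 0 := mul_neg_of_neg_of_pos hneg hb2
        obtain ⟨c, hc1, hc2, hc3⟩ := ivt_neg p (t i) b hb1 hmul
        exact ⟨c, fun _ => ⟨hc1, fun h => absurd h hi1, hc3⟩⟩
    · exact ⟨0, fun h => absurd h hi⟩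
  choose ρ hρ using hroot
  have hlt : ∀ i, i < N → t i < ρ i := fun i hi => (hρ i hi).1
  have hup : ∀ i j, i < j → j < N → ρ i < t j := by
    intro i j hij hj
    have hi1 : i + 1 < N ∨ i + 1 = j ∧ j < N := by omega
    have h1 : ρ i < t (i+1) := (hρ i (by omega)).2.1 (by omega)
    rcases eq_or_lt_of_le (show i+1 ≤ j by omega) with h|h
    · rwa [h] at h1
    · exact lt_trans h1 (ht (i+1) j h hj)
  have hρmono : ∀ i j, i < j → j < N → ρ i < ρ j := fun i j hij hj =>
    lt_trans (hup i j hij hj) (hlt j hj)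
  -- p equals the product
  set q := ∏ i ∈ Finset.range N, (X - C (ρ i)) with hq
  have hqm : q.Monic := monic_prod_of_monic _ _ fun i _ => monic_X_sub_C _
  have hqd : q.natDegree = N := by
    rw [hq, natDegree_prod_of_monic _ _ fun i _ => monic_X_sub_C _]
    simp [natDegree_X_sub_C]
  have hsub : (p - q).degree < (N : WithBot ℕ) := by
    have h1 : p.degree = q.degree := by
      rw [Polynomial.degree_eq_natDegree hm.ne_zero, Polynomial.degree_eq_natDegree hqm.ne_zero,
        hdeg, hqd]
    have h2 : p.leadingCoeff = q.leadingCoeff := by rw [hm.leadingCoeff, hqm.leadingCoeff]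
    have h3 := Polynomial.degree_sub_lt h1 hm.ne_zero h2
    rwa [Polynomial.degree_eq_natDegree hm.ne_zero, hdeg] at h3
  have hz : p - q = 0 := by
    have hinj : Set.InjOn ρ (Finset.range N) := by
      intro i hi j hj hij
      by_contra hne
      rcases lt_or_gt_of_ne hne with h|h
      · exact absurd hij (ne_of_lt (hρmono i j h (Finset.mem_range.mp hj)))
      · exact absurd hij.symm (ne_of_lt (hρmono j i h (Finset.mem_range.mp hi)))
    refine Polynomial.eq_zero_of_degree_lt_of_eval_index_eq_zero (Finset.range N) hinj ?_ ?_
    · simpa using hsub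
    · intro i hi
      have hiN := Finset.mem_range.mp hi
      rw [eval_sub, (hρ i hiN).2.2, hq, eval_prod]
      rw [Finset.prod_eq_zero hi (by simp)]
      ring
  exact ⟨ρ, by linear_combination hz, hlt, hup⟩

lemma Inv (x : ℝ) (hx : x ≠ 0) (hu : 1/4 < gu x) (m : ℕ) :
    ∃ γ δ : ℕ → ℝ,
      R x (2*m) = ∏ i ∈ Finset.range m, (X - C (γ i)) ∧
      R x (2*m+1) = ∏ i ∈ Finset.range m, (X - C (δ i)) ∧
      (∀ i, i < m → -(2*(m:ℝ)-1)/2 < γ i) ∧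
      (∀ i, i < m → γ i < δ i) ∧
      (∀ i j, i < j → j < m → δ i < γ j) := by
  have hgu : 0 < gu x := by linarith
  induction m with
  | zero =>
    refine ⟨fun _ => 0, fun _ => 0, by simp [R_zero x], by simp [R_one x],
      fun i hi => absurd hi (by omega), fun i hi => absurd hi (by omega),
      fun i j hij hj => absurd hj (by omega)⟩
  | succ m ih =>
    obtain ⟨γ, δ, hR0, hR1, hb, hgd, hdg⟩ := ih
    have hδmono : ∀ i j, i < j → j < m → δ i < δ j :=
      fun i j hij hj => lt_trans (hdg i j hij hj) (hgd j hj)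
    have hbδ : ∀ i, i < m → -(2*(m:ℝ)-1)/2 < δ i :=
      fun i hi => lt_trans (hb i hi) (hgd i hi)
    set ξ : ℝ := -(2*(m:ℝ)+1)/2 with hξ
    set t : ℕ → ℝ := fun i => if i = 0 then ξ else δ (i-1) with ht_def
    have ht0 : t 0 = ξ := rfl
    have htsucc : ∀ i, t (i+1) = δ i := fun i => by simp [ht_def]
    have hξlt : ∀ i, i < m → ξ < δ i := by
      intro i hi
      have h1 := hbδ i hi
      have h2 : ξ < -(2*(m:ℝ)-1)/2 := by rw [hξ]; linarith
      linarith
    have htmono : ∀ i j, i < j → j < m+1 → t i < t j := by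
      intro i j hij hj
      rcases Nat.eq_zero_or_pos i with rfl|hip
      · obtain ⟨j', rfl⟩ : ∃ j', j = j'+1 := ⟨j-1, by omega⟩
        rw [ht0, htsucc]
        exact hξlt j' (by omega)
      · obtain ⟨i', rfl⟩ : ∃ i', i = i'+1 := ⟨i-1, by omega⟩
        obtain ⟨j', rfl⟩ : ∃ j', j = j'+1 := ⟨j-1, by omega⟩
        rw [htsucc, htsucc]
        exact hδmono i' j' (by omega) (by omega)
    have hdeg2 : (R x (2*m+2)).natDegree = m+1 := by
      have := (R_monic x (2*m+2)).2; omega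
    have hrec := R_even x hx m
    have hsign : ∀ i, i < m+1 → 0 < (-1:ℝ)^(m+1-i) * (R x (2*m+2)).eval (t i) := by
      intro i hi
      rcases Nat.eq_zero_or_pos i with rfl|hip
      · have hev := eval_R_even x (m+1)
        have hpt : -(2*(((m+1):ℕ):ℝ)-1)/2 = ξ := by rw [hξ]; push_cast; ring
        rw [show 2*(m+1) = 2*m+2 by omega, hpt] at hev
        rw [ht0, hev, Nat.sub_zero]
        have h2 : (-1:ℝ)^(m+1) * (((2*m+2).factorial : ℝ) / (4^(m+1) * (((m+1)).factorial : ℝ)) * (1 - 4*gu x)^(m+1))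
            = ((2*m+2).factorial : ℝ) / (4^(m+1) * (((m+1)).factorial : ℝ)) * (4*gu x - 1)^(m+1) := by
          rw [show (4*gu x - 1 : ℝ) = (-1) * (1 - 4*gu x) by ring, mul_pow]
          ring
        rw [h2]
        have h3 : (0:ℝ) < (4*gu x - 1)^(m+1) := pow_pos (by linarith) _
        positivity
      · obtain ⟨i', rfl⟩ : ∃ i', i = i'+1 := ⟨i-1, by omega⟩
        have hi' : i' < m := by omega
        have hEval : (R x (2*m+2)).eval (δ i')
            = -((4*(m:ℝ)+2) * gu x) * ∏ j ∈ Finset.range m, (δ i' - γ j) := by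
          rw [hrec, hR0, hR1]
          simp only [eval_sub, eval_mul, eval_add, eval_X, eval_C, eval_prod]
          rw [Finset.prod_eq_zero (Finset.mem_range.mpr hi') (by simp), mul_zero, zero_sub]
          ring
        have hSGN := SGN γ (δ i') m (i'+1) (by omega)
          (fun j hj => by
            rcases Nat.lt_succ_iff_lt_or_eq.mp hj with h|h
            · exact lt_trans (hgd j (by omega)) (hδmono j i' h hi')
            · rw [h]; exact hgd i' hi')
          (fun j hj1 hj2 => hdg i' j hj1 hj2)
        have hK : 0 < (4*(m:ℝ)+2) * gu x := by
          apply mul_pos _ hgu; positivity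
        rw [htsucc, hEval, show m+1-(i'+1) = (m-(i'+1))+1 by omega, pow_succ]
        nlinarith [hSGN, hK]
    obtain ⟨ρ, hρprod, hρlt, hρup⟩ :=
      RC (R x (2*m+2)) (m+1) (R_monic x (2*m+2)).1 hdeg2 (by omega) t htmono hsign
    have hρbound : ∀ i, i < m+1 → ξ < ρ i := by
      intro i hi
      rcases Nat.eq_zero_or_pos i with rfl|hip
      · have := hρlt 0 hi; rwa [ht0] at this
      · have h1 := htmono 0 i (by omega) hi
        rw [ht0] at h1
        exact lt_trans h1 (hρlt i hi)
    have hρmono : ∀ i j, i < j → j < m+1 → ρ i < ρ j :=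
      fun i j hij hj => lt_trans (hρup i j hij hj) (hρlt j hj)
    have hdeg3 : (R x (2*m+3)).natDegree = m+1 := by
      have := (R_monic x (2*m+3)).2; omega
    have hrec2 := R_odd x hx m
    have hsign2 : ∀ i, i < m+1 → 0 < (-1:ℝ)^(m+1-i) * (R x (2*m+3)).eval (ρ i) := by
      intro i hi
      have hroot2 : (R x (2*m+2)).eval (ρ i) = 0 := by
        rw [hρprod, eval_prod]
        exact Finset.prod_eq_zero (Finset.mem_range.mpr hi) (by simp)
      have hEval : (ρ i + ((m:ℝ)+1)) * (R x (2*m+3)).eval (ρ i)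
          = -((4*(m:ℝ)+4) * gu x) * ((ρ i + (2*(m:ℝ)+1)/2) * ∏ j ∈ Finset.range m, (ρ i - δ j)) := by
        have h5 := congrArg (fun q => q.eval (ρ i)) hrec2
        simp only [eval_mul, eval_add, eval_sub, eval_X, eval_C] at h5
        rw [hroot2, hR1] at h5
        simp only [eval_prod, eval_sub, eval_X, eval_C, mul_zero] at h5
        rw [h5]
        ring
      have hSGN2 := SGN δ (ρ i) m i (by omega)
        (fun j hj => by
          rcases eq_or_lt_of_le (show j+1 ≤ i by omega) with h|h
          · subst h
            have h6 := hρlt (j+1) hi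
            rwa [htsucc] at h6
          · have h6 := lt_trans (htmono (j+1) i h hi) (hρlt i hi)
            rwa [htsucc] at h6)
        (fun j hj1 hj2 => by
          have h7 := hρup i (j+1) (by omega) (by omega)
          rwa [htsucc] at h7)
      have hpos1 : 0 < ρ i + (2*(m:ℝ)+1)/2 := by
        have := hρbound i hi; rw [hξ] at this; linarith
      have hpos2 : 0 < ρ i + ((m:ℝ)+1) := by
        have := hρbound i hi; rw [hξ] at this; linarith
      have hK' : 0 < (4*(m:ℝ)+4) * gu x := by
        apply mul_pos _ hgu; positivity
      rw [show m+1-i = (m-i)+1 by omega, pow_succ]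
      have key : 0 < (ρ i + ((m:ℝ)+1)) * ((-1:ℝ)^(m-i) * (-1) * (R x (2*m+3)).eval (ρ i)) := by
        have e9 : (ρ i + ((m:ℝ)+1)) * ((-1:ℝ)^(m-i) * (-1) * (R x (2*m+3)).eval (ρ i))
            = (-1:ℝ)^(m-i) * (-1) * ((ρ i + ((m:ℝ)+1)) * (R x (2*m+3)).eval (ρ i)) := by ring
        rw [e9, hEval]
        have e10 : (-1:ℝ)^(m-i) * (-1) * (-((4*(m:ℝ)+4) * gu x) * ((ρ i + (2*(m:ℝ)+1)/2) * ∏ j ∈ Finset.range m, (ρ i - δ j)))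
            = ((4*(m:ℝ)+4) * gu x) * (ρ i + (2*(m:ℝ)+1)/2) * ((-1:ℝ)^(m-i) * ∏ j ∈ Finset.range m, (ρ i - δ j)) := by ring
        rw [e10]
        exact mul_pos (mul_pos hK' hpos1) hSGN2
      nlinarith [key, hpos2]
    obtain ⟨δ', hδ'prod, hδ'lt, hδ'up⟩ :=
      RC (R x (2*m+3)) (m+1) (R_monic x (2*m+3)).1 hdeg3 (by omega) ρ hρmono hsign2
    refine ⟨ρ, δ', ?_, ?_, ?_, fun i hi => hδ'lt i hi, fun i j hij hj => hδ'up i j hij hj⟩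
    · rw [show 2*(m+1) = 2*m+2 by omega]; exact hρprod
    · rw [show 2*(m+1)+1 = 2*m+3 by omega]; exact hδ'prod
    · intro i hi
      have h11 : -(2*(((m+1):ℕ):ℝ)-1)/2 = ξ := by rw [hξ]; push_cast; ring
      rw [h11]
      exact hρbound i hi

/-- x² = 1 case: explicit half-integer roots -/
lemma R_quarter (x : ℝ) (hx : x ≠ 0) (hu : gu x = 1/4) (m : ℕ) :
    R x (2*m) = ∏ i ∈ Finset.range m, (X + C ((2*(i:ℝ)+1)/2)) ∧
    R x (2*m+1) = ∏ i ∈ Finset.range m, (X + C ((2*(i:ℝ)+1)/2)) := by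
  induction m with
  | zero => simp [R_zero, R_one]
  | succ m ih =>
    obtain ⟨h0, h1⟩ := ih
    have he := R_even x hx m
    rw [h0, h1, hu] at he
    have hnew : R x (2*m+2) = ∏ i ∈ Finset.range (m+1), (X + C ((2*(i:ℝ)+1)/2)) := by
      rw [he, Finset.prod_range_succ]
      have hC1 : C ((4*(m:ℝ)+2) * (1/4:ℝ)) = C ((2*(m:ℝ)+1)/2) := by
        congr 1; ring
      have hC : C (2*(m:ℝ)+1) = C ((2*(m:ℝ)+1)/2) + C ((2*(m:ℝ)+1)/2) := by
        rw [← map_add]; congr 1; ring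
      rw [hC1, hC]
      ring
    refine ⟨by rw [show 2*(m+1) = 2*m+2 by omega]; exact hnew, ?_⟩
    have ho := R_odd x hx m
    rw [hnew, h1, hu] at ho
    have hc : (X + C ((m:ℝ)+1)) * R x (2*m+3)
        = (X + C ((m:ℝ)+1)) * ∏ i ∈ Finset.range (m+1), (X + C ((2*(i:ℝ)+1)/2)) := by
      rw [ho, Finset.prod_range_succ]
      have hC2 : C ((4*(m:ℝ)+4) * (1/4:ℝ)) = C ((m:ℝ)+1) := by congr 1; ring
      have hC3 : C (2*(m:ℝ)+2) = C ((m:ℝ)+1) + C ((m:ℝ)+1) := by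
        rw [← map_add]; congr 1; ring
      rw [hC2, hC3]
      ring
    have := mul_left_cancel₀ (monic_X_add_C ((m:ℝ)+1)).ne_zero hc
    rw [show 2*(m+1)+1 = 2*m+3 by omega]
    exact this

lemma prod_linear_roots (N : ℕ) (f : ℕ → ℝ) :
    (∏ i ∈ Finset.range N, (X - C (f i))).roots.card = N := by
  induction N with
  | zero => simp
  | succ N ih =>
    rw [Finset.prod_range_succ, Polynomial.roots_mul, Multiset.card_add, ih, roots_X_sub_C]
    · simp
    · exact mul_ne_zero (monic_prod_of_monic _ _ fun i _ => monic_X_sub_C _).ne_zero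
        (X_sub_C_ne_zero _)

lemma G_eq_prod (n : ℕ) : G n = ∏ j ∈ Finset.range ((n+1)/2), (X - C (-(j:ℝ))) := by
  rw [G]
  exact Finset.prod_congr rfl fun j _ => by rw [map_neg, sub_neg_eq_add]

lemma G_natDegree (n : ℕ) : (G n).natDegree = (n+1)/2 := by
  rw [G, natDegree_prod_of_monic _ _ (fun i _ => monic_X_add_C _)]
  simp only [natDegree_X_add_C, Finset.sum_const, smul_eq_mul, mul_one, Finset.card_range]

/-- R splits for all |x| ≤ 1, x ≠ 0 -/
lemma R_splits (x : ℝ) (hx : x ≠ 0) (hx1 : x^2 ≤ 1) (n : ℕ) :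
    ∃ ρ : ℕ → ℝ, R x n = ∏ i ∈ Finset.range (n/2), (X - C (ρ i)) := by
  have h4 : (0:ℝ) < (2*x)^2 := by positivity
  have hle : (2*x)^2 ≤ 4 := by nlinarith
  have hu : 1/4 ≤ gu x := by
    rw [gu, show (1/4 : ℝ) = (4:ℝ)⁻¹ by norm_num]
    exact inv_anti₀ h4 hle
  obtain ⟨m, hm, hm2⟩ : ∃ m, (n = 2*m ∨ n = 2*m+1) ∧ n/2 = m := ⟨n/2, by omega, rfl⟩
  rcases eq_or_lt_of_le hu with hu4|hu4
  · -- gu x = 1/4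
    obtain ⟨hq0, hq1⟩ := R_quarter x hx hu4.symm m
    refine ⟨fun i => -((2*(i:ℝ)+1)/2), ?_⟩
    rw [hm2]
    rcases hm with h|h
    · rw [h, hq0]
      exact Finset.prod_congr rfl fun i _ => by rw [map_neg, sub_neg_eq_add]
    · rw [h, hq1]
      exact Finset.prod_congr rfl fun i _ => by rw [map_neg, sub_neg_eq_add]
  · obtain ⟨γ, δ, hg, hd, _, _, _⟩ := Inv x hx hu4 m
    rcases hm with h|h
    · exact ⟨γ, by rw [hm2, h, hg]⟩
    · exact ⟨δ, by rw [hm2, h, hd]⟩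


end Gg

open Gg in
/-- For every `x₀ ∈ [-1,1]`, `x₀ ≠ 0`, the polynomial `G_n(x₀, ·)` in the parameter `z`
has degree `n` and all of its roots are real. -/
theorem gegenbauerZ_real_rooted (n : ℕ) (x₀ : ℝ)
    (hx₁ : x₀ ∈ Set.Icc (-1 : ℝ) 1) (hx₀ : x₀ ≠ 0) :
    (gegenbauerZ n x₀).natDegree = n ∧
    (gegenbauerZ n x₀).roots.card = n := by
  obtain ⟨hl, hr⟩ := hx₁
  have hsq : x₀^2 ≤ 1 := by nlinarith
  have hc : (2*x₀)^n / (n.factorial : ℝ) ≠ 0 :=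
    div_ne_zero (pow_ne_zero _ (by simpa using hx₀)) (fact_ne n)
  obtain ⟨ρ, hρ⟩ := R_splits x₀ hx₀ hsq n
  have hfac := factorization x₀ hx₀ n
  have hGne : G n ≠ 0 := (G_monic n).ne_zero
  have hRne : R x₀ n ≠ 0 := (R_monic x₀ n).1.ne_zero
  constructor
  · rw [hfac, natDegree_C_mul hc, natDegree_mul hGne hRne, G_natDegree, (R_monic x₀ n).2]
    omega
  · rw [hfac, Polynomial.roots_C_mul _ hc, Polynomial.roots_mul (mul_ne_zero hGne hRne),
      Multiset.card_add]
    rw [G_eq_prod, prod_linear_roots, hρ, prod_linear_roots]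
    omega
end

section
/- At x = −1, the Gegenbauer polynomial in the parameter z satisfies G_n(−1, z) = (−1)^n (2^n/n!) Π_{i=0}^{n−1}(z + i/2); in particular it is real-rooted in z with n simple roots located at z = −i/2 for i = 0,…,n−1. -/
open Polynomial Finset

noncomputable def ccG (n k : ℕ) : ℝ :=
  if 2*k ≤ n then (-1:ℝ)^k * (-2:ℝ)^(n-2*k) / ((k.factorial : ℝ) * ((n-2*k).factorial : ℝ)) else 0

noncomputable def ggG (m : ℕ) (z : ℝ) : ℝ := ∏ i ∈ Finset.range m, (z + (i:ℝ))

noncomputable def FG (n : ℕ) (z : ℝ) : ℝ := ∑ k ∈ Finset.range (n+1), ccG n k * ggG (n - k) z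

lemma ccG_eq_zero {n k : ℕ} (h : n < 2*k) : ccG n k = 0 := if_neg (by omega)

lemma ggG_succ (m : ℕ) (z : ℝ) : ggG (m+1) z = ggG m z * (z + m) := by
  simp [ggG, Finset.prod_range_succ]

lemma eval_gegen (n : ℕ) (z : ℝ) : (gegenbauerZ n (-1)).eval z = FG n z := by
  rw [FG, ← Finset.sum_subset (Finset.range_subset_range.mpr (by omega : n/2+1 ≤ n+1))
    (fun k _ hk => by
      rw [ccG_eq_zero, zero_mul]
      have := Finset.mem_range.not.mp hk
      have : n/2 < k := by omega
      omega)]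
  simp only [gegenbauerZ, eval_finset_sum, eval_mul, eval_C, eval_prod, eval_add, eval_X]
  refine Finset.sum_congr rfl fun k hk => ?_
  have hk : 2*k ≤ n := by
    have := Finset.mem_range.mp hk; omega
  rw [ccG, if_pos hk, ggG]
  norm_num

lemma ccG_zero (n : ℕ) : ((n:ℝ)+1) * ccG (n+1) 0 = -2 * ccG n 0 := by
  rw [ccG, ccG, if_pos (by omega), if_pos (by omega)]
  simp only [Nat.mul_zero, Nat.sub_zero]
  rw [pow_succ, Nat.factorial_succ]
  have h : ((n.factorial : ℝ)) ≠ 0 := Nat.cast_ne_zero.mpr n.factorial_ne_zero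
  push_cast
  field_simp

lemma ccG_succ (n j : ℕ) :
    ((n:ℝ)+1) * ccG (n+1) (j+1) = -2 * ccG n (j+1) + ((n:ℝ) - 2*j) * ccG n j := by
  rcases le_or_gt (2*(j+1)) n with h | h
  · -- main case : n = 2*j+2+m
    obtain ⟨m, rfl⟩ : ∃ m, n = 2*j+2+m := ⟨n - (2*j+2), by omega⟩
    rw [ccG, ccG, ccG, if_pos (by omega), if_pos (by omega), if_pos (by omega)]
    have e1 : 2*j+2+m+1 - 2*(j+1) = m+1 := by omega
    have e2 : 2*j+2+m - 2*(j+1) = m := by omega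
    have e3 : 2*j+2+m - 2*j = m+2 := by omega
    rw [e1, e2, e3, Nat.factorial_succ (m+1), Nat.factorial_succ m, Nat.factorial_succ j,
      pow_succ ((-2:ℝ)) m, pow_succ ((-2:ℝ)) (m+1), pow_succ ((-1:ℝ)) j]
    have hm : ((m.factorial : ℝ)) ≠ 0 := Nat.cast_ne_zero.mpr m.factorial_ne_zero
    have hj : ((j.factorial : ℝ)) ≠ 0 := Nat.cast_ne_zero.mpr j.factorial_ne_zero
    push_cast
    field_simp
    ring
  · rcases eq_or_lt_of_le (by omega : n ≤ 2*j+1) with h2 | h2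
    · -- n = 2*j+1
      obtain rfl : n = 2*j+1 := h2.symm ▸ rfl
      rw [ccG, ccG, ccG, if_pos (by omega), if_neg (by omega), if_pos (by omega)]
      have e1 : 2*j+1+1 - 2*(j+1) = 0 := by omega
      have e2 : 2*j+1 - 2*j = 1 := by omega
      rw [e1, e2, Nat.factorial_succ j]
      have hj : ((j.factorial : ℝ)) ≠ 0 := Nat.cast_ne_zero.mpr j.factorial_ne_zero
      push_cast
      field_simp
      ring
    · -- n < 2*j+1, i.e. n ≤ 2*j
      rcases eq_or_lt_of_le (by omega : n ≤ 2*j) with h3 | h3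
      · obtain rfl : n = 2*j := h3.symm ▸ rfl
        rw [ccG_eq_zero (by omega), ccG_eq_zero (by omega)]
        push_cast
        ring
      · rw [ccG_eq_zero (by omega), ccG_eq_zero (by omega), ccG_eq_zero (by omega)]
        ring

lemma keyG (n : ℕ) (z : ℝ) :
    ((n:ℝ)+1) * FG (n+1) z = -(2*z + n) * FG n z := by
  have hA : -(2*z + (n:ℝ)) * FG n z
      = (∑ k ∈ Finset.range (n+1), (-2 * ccG n k) * ggG (n+1-k) z)
      + ∑ k ∈ Finset.range (n+1), (((n:ℝ) - 2*k) * ccG n k) * ggG (n-k) z := by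
    rw [FG, Finset.mul_sum, ← Finset.sum_add_distrib]
    refine Finset.sum_congr rfl fun k hk => ?_
    have hk' : k ≤ n := by have := Finset.mem_range.mp hk; omega
    have h1 : n + 1 - k = (n-k) + 1 := by omega
    have h2 : ((n - k : ℕ) : ℝ) = (n:ℝ) - k := by
      rw [Nat.cast_sub hk']
    rw [h1, ggG_succ, h2]
    ring
  have hA1 : ∑ k ∈ Finset.range (n+1), (-2 * ccG n k) * ggG (n+1-k) z
      = (∑ j ∈ Finset.range n, (-2 * ccG n (j+1)) * ggG (n-j) z)
        + (-2 * ccG n 0) * ggG (n+1) z := by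
    rw [Finset.sum_range_succ' (fun k => (-2 * ccG n k) * ggG (n+1-k) z) n]
    congr 1
    refine Finset.sum_congr rfl fun j hj => ?_
    congr 2
    omega
  rw [hA, hA1]
  calc ((n:ℝ)+1) * FG (n+1) z
      = ∑ k ∈ Finset.range (n+2), ((n:ℝ)+1) * (ccG (n+1) k * ggG (n+1-k) z) := by
        rw [FG, Finset.mul_sum]
    _ = (∑ j ∈ Finset.range (n+1), ((n:ℝ)+1) * (ccG (n+1) (j+1) * ggG (n-j) z))
        + ((n:ℝ)+1) * (ccG (n+1) 0 * ggG (n+1) z) := by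
        rw [Finset.sum_range_succ' (fun k => ((n:ℝ)+1) * (ccG (n+1) k * ggG (n+1-k) z)) (n+1)]
        congr 1
        refine Finset.sum_congr rfl fun j hj => ?_
        congr 3
        omega
    _ = (∑ j ∈ Finset.range (n+1),
          ((-2 * ccG n (j+1)) * ggG (n-j) z + (((n:ℝ) - 2*j) * ccG n j) * ggG (n-j) z))
        + (-2 * ccG n 0) * ggG (n+1) z := by
        congr 1
        · refine Finset.sum_congr rfl fun j hj => ?_
          rw [show ((n:ℝ)+1) * (ccG (n+1) (j+1) * ggG (n-j) z)
              = (((n:ℝ)+1) * ccG (n+1) (j+1)) * ggG (n-j) z from by ring, ccG_succ]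
          ring
        · rw [show ((n:ℝ)+1) * (ccG (n+1) 0 * ggG (n+1) z)
              = (((n:ℝ)+1) * ccG (n+1) 0) * ggG (n+1) z from by ring, ccG_zero]
    _ = ((∑ j ∈ Finset.range (n+1), (-2 * ccG n (j+1)) * ggG (n-j) z)
        + (-2 * ccG n 0) * ggG (n+1) z)
        + ∑ j ∈ Finset.range (n+1), (((n:ℝ) - 2*j) * ccG n j) * ggG (n-j) z := by
        rw [Finset.sum_add_distrib]
        ring
    _ = ((∑ j ∈ Finset.range n, (-2 * ccG n (j+1)) * ggG (n-j) z)
        + (-2 * ccG n 0) * ggG (n+1) z)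
        + ∑ j ∈ Finset.range (n+1), (((n:ℝ) - 2*j) * ccG n j) * ggG (n-j) z := by
        rw [Finset.sum_range_succ, ccG_eq_zero (show n < 2*(n+1) by omega)]
        ring

lemma FG_closed (n : ℕ) (z : ℝ) :
    FG n z = (-1:ℝ)^n * 2^n / (n.factorial : ℝ) * ∏ i ∈ Finset.range n, (z + (i:ℝ)/2) := by
  induction n with
  | zero => simp [FG, ccG, ggG]
  | succ n ih =>
    have hn : ((n:ℝ)+1) ≠ 0 := by positivity
    have h := keyG n z
    have hF : FG (n+1) z = -(2*z + (n:ℝ)) * FG n z / ((n:ℝ)+1) := by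
      field_simp at h ⊢
      linarith [h]
    rw [hF, ih, Finset.prod_range_succ, Nat.factorial_succ]
    have hfac : ((n.factorial : ℝ)) ≠ 0 := Nat.cast_ne_zero.mpr n.factorial_ne_zero
    push_cast
    rw [pow_succ ((-1:ℝ)) n, pow_succ (2:ℝ) n]
    field_simp

lemma gegen_closed (n : ℕ) :
    gegenbauerZ n (-1) =
      Polynomial.C ((-1 : ℝ) ^ n * 2 ^ n / (n.factorial : ℝ)) *
        ∏ i ∈ Finset.range n, (Polynomial.X + Polynomial.C ((i : ℝ) / 2)) := by
  apply Polynomial.funext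
  intro z
  rw [eval_gegen, FG_closed]
  simp [eval_prod]

/-- At `x = -1`: `G_n(-1, z) = (-1)^n (2^n/n!) ∏_{i=0}^{n-1}(z + i/2)`, so it is
real-rooted in `z` with `n` simple roots at `z = -i/2`, `i = 0, …, n-1`. -/
theorem gegenbauerZ_at_neg_one (n : ℕ) :
    gegenbauerZ n (-1) =
      Polynomial.C ((-1 : ℝ) ^ n * 2 ^ n / (n.factorial : ℝ)) *
        ∏ i ∈ Finset.range n, (Polynomial.X + Polynomial.C ((i : ℝ) / 2)) ∧
    (gegenbauerZ n (-1)).roots = (Multiset.range n).map (fun i => -((i : ℝ) / 2)) := by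
  refine ⟨gegen_closed n, ?_⟩
  have hc : (-1:ℝ)^n * 2^n / (n.factorial : ℝ) ≠ 0 := by
    apply div_ne_zero
    · exact mul_ne_zero (pow_ne_zero _ (by norm_num)) (by positivity)
    · exact Nat.cast_ne_zero.mpr n.factorial_ne_zero
  rw [gegen_closed n, Polynomial.roots_C_mul _ hc]
  have h2 : (∏ i ∈ Finset.range n, (Polynomial.X + Polynomial.C ((i:ℝ)/2)))
      = (((Multiset.range n).map (fun i : ℕ => -((i:ℝ)/2))).map
          (fun a : ℝ => Polynomial.X - Polynomial.C a)).prod := by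
    rw [Multiset.map_map, Finset.prod_eq_multiset_prod, Finset.range_val]
    refine congrArg Multiset.prod (Multiset.map_congr rfl ?_)
    intro i _
    simp [sub_neg_eq_add]
  rw [h2, Polynomial.roots_multiset_prod_X_sub_C]
  simp [Multiset.map_map]
end
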